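/- arXiv:1802.06377 — 10 statements merged into one kernel-verified Lean document; each statement's English description precedes it below -/
import Mathlib

section
/- Let R be a DVR with uniformizer π and let Γ be an abstract group. Suppose that every finitely generated R-module V with πV = 0 carrying a Γ-action admits a weak lift, i.e., there is a Γ-equivariant surjection Ṽ → V from a Γ-representation Ṽ whose underlying R-module is finitely generated and torsion-free. Then every Γ-representation E on a finitely generated R-module admits a weak lift. -/
/-- A weak lift of a representation `ρ` of the abstract group `Γ` on the `R`-module `V`:
a representation on a finitely generated torsion-free `R`-module together with an
equivariant surjection onto `V`. -/
structure WeakLift (R Γ : Type) [CommRing R] [Group Γ] (V : Type) [AddCommGroup V]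
    [Module R V] (ρ : Representation R Γ V) where
  W : Type
  [instAddCommGroup : AddCommGroup W]
  [instModule : Module R W]
  finite : Module.Finite R W
  torsionFree : NoZeroSMulDivisors R W
  σ : Representation R Γ W
  f : W →ₗ[R] V
  surjective : Function.Surjective f
  equivariant : ∀ γ : Γ, f ∘ₗ σ γ = ρ γ ∘ₗ f

section Aux

variable {R Γ : Type} [CommRing R] [Group Γ]

/-- Compose a weak lift with an equivariant surjection. -/
def WeakLift.comp {E' E : Type} [AddCommGroup E'] [Module R E'] [AddCommGroup E] [Module R E]
    {ρ' : Representation R Γ E'} {ρ : Representation R Γ E}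
    (g : E' →ₗ[R] E) (hg : Function.Surjective g)
    (heq : ∀ γ : Γ, g ∘ₗ ρ' γ = ρ γ ∘ₗ g)
    (L : WeakLift R Γ E' ρ') : WeakLift R Γ E ρ :=
  letI := L.instAddCommGroup
  letI := L.instModule
  { W := L.W
    finite := L.finite
    torsionFree := L.torsionFree
    σ := L.σ
    f := g ∘ₗ L.f
    surjective := hg.comp L.surjective
    equivariant := fun γ => by
      rw [LinearMap.comp_assoc, L.equivariant γ, ← LinearMap.comp_assoc, heq γ,
        LinearMap.comp_assoc] }

end Aux

theorem stmt3_key {R : Type} [CommRing R] [IsDomain R] [IsDiscreteValuationRing R]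
    (π : R) (hπ : Irreducible π) (Γ : Type) [Group Γ]
    (h : ∀ (V : Type) [AddCommGroup V] [Module R V], Module.Finite R V →
      (∀ v : V, π • v = 0) → ∀ ρ : Representation R Γ V, Nonempty (WeakLift R Γ V ρ)) :
    ∀ (n : ℕ) (E : Type) [AddCommGroup E] [Module R E], Module.Finite R E →
      ∀ ρ : Representation R Γ E, (∀ e ∈ Submodule.torsion R E, π ^ n • e = 0) →
      Nonempty (WeakLift R Γ E ρ) := by
  intro n
  induction n with
  | zero =>
    intro E _ _ hfin ρ htor
    have hTF : NoZeroSMulDivisors R E := by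
      constructor
      intro r e hre
      by_cases hr : r = 0
      · exact Or.inl hr
      · refine Or.inr ?_
        have he : e ∈ Submodule.torsion R E :=
          (Submodule.mem_torsion_iff e).mpr ⟨⟨r, mem_nonZeroDivisors_of_ne_zero hr⟩, hre⟩
        simpa using htor e he
    exact ⟨{ W := E, finite := hfin, torsionFree := hTF, σ := ρ, f := LinearMap.id,
             surjective := Function.surjective_id,
             equivariant := fun γ => by ext x; simp }⟩
  | succ n ih =>
    intro E _ _ hfin ρ htor
    -- N = πE
    set N : Submodule R E := LinearMap.range ((π : R) • (LinearMap.id : E →ₗ[R] E)) with hN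
    have hmemN : ∀ x : E, x ∈ N ↔ ∃ y : E, π • y = x := by
      intro x
      simp [hN, LinearMap.mem_range]
    have hmap : ∀ γ : Γ, N ≤ N.comap (ρ γ) := by
      intro γ x hx
      obtain ⟨y, hy⟩ := (hmemN x).1 hx
      exact Submodule.mem_comap.2 ((hmemN _).2 ⟨ρ γ y, by rw [← map_smul, hy]⟩)
    -- representation on E ⧸ N
    let ρ' : Representation R Γ (E ⧸ N) :=
    { toFun := fun γ => N.mapQ N (ρ γ) (hmap γ)
      map_one' := by
        apply Submodule.linearMap_qext
        ext e
        simp [Submodule.mapQ_apply]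
      map_mul' := fun γ₁ γ₂ => by
        apply Submodule.linearMap_qext
        ext e
        simp [Submodule.mapQ_apply] }
    have hρ'q : ∀ (γ : Γ) (e : E), ρ' γ (N.mkQ e) = N.mkQ (ρ γ e) := by
      intro γ e
      show (N.mapQ N (ρ γ) (hmap γ)) (Submodule.Quotient.mk e) = Submodule.Quotient.mk (ρ γ e)
      apply Submodule.mapQ_apply
    have hVfin : Module.Finite R (E ⧸ N) := Module.Finite.quotient R N
    have hVkill : ∀ v : E ⧸ N, π • v = 0 := by
      intro v
      obtain ⟨e, rfl⟩ := N.mkQ_surjective v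
      rw [← map_smul, Submodule.mkQ_apply, Submodule.Quotient.mk_eq_zero]
      exact (hmemN _).2 ⟨e, rfl⟩
    obtain ⟨L⟩ := h (E ⧸ N) hVfin hVkill ρ'
    letI := L.instAddCommGroup
    letI := L.instModule
    haveI := L.finite
    haveI := L.torsionFree
    -- fiber product
    let g : L.W × E →ₗ[R] E ⧸ N := L.f ∘ₗ LinearMap.fst R L.W E - N.mkQ ∘ₗ LinearMap.snd R L.W E
    set P : Submodule R (L.W × E) := LinearMap.ker g with hP
    have hpres : ∀ γ : Γ, ∀ x ∈ P, LinearMap.prodMap (L.σ γ) (ρ γ) x ∈ P := by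
      intro γ x hx
      have hx' : L.f x.1 - N.mkQ x.2 = 0 := hx
      show L.f (L.σ γ x.1) - N.mkQ (ρ γ x.2) = 0
      have h1 : L.f (L.σ γ x.1) = ρ' γ (L.f x.1) := LinearMap.congr_fun (L.equivariant γ) x.1
      rw [h1, ← hρ'q, ← map_sub, hx', map_zero]
    let τ : Representation R Γ P :=
    { toFun := fun γ => (LinearMap.prodMap (L.σ γ) (ρ γ)).restrict (hpres γ)
      map_one' := by
        refine LinearMap.ext fun x => Subtype.ext ?_
        show (LinearMap.prodMap (L.σ 1) (ρ 1)) (x : L.W × E) = (x : L.W × E)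
        simp
      map_mul' := fun γ₁ γ₂ => by
        refine LinearMap.ext fun x => Subtype.ext ?_
        show (LinearMap.prodMap (L.σ (γ₁ * γ₂)) (ρ (γ₁ * γ₂))) (x : L.W × E) =
          (LinearMap.prodMap (L.σ γ₁) (ρ γ₁)) ((LinearMap.prodMap (L.σ γ₂) (ρ γ₂)) (x : L.W × E))
        simp [map_mul, Module.End.mul_apply] }
    haveI : Module.Finite R (L.W × E) := Module.Finite.prod
    haveI : IsNoetherian R (L.W × E) := isNoetherian_of_isNoetherianRing_of_finite R _
    haveI hPfin : Module.Finite R P := inferInstance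
    -- torsion of P is killed by π ^ n
    have hPtor : ∀ p ∈ Submodule.torsion R P, π ^ n • p = 0 := by
      rintro p hp
      obtain ⟨r, hr⟩ := (Submodule.mem_torsion_iff p).1 hp
      have hr' : (r : R) • (p : L.W × E) = 0 := by
        have h1 := congrArg Subtype.val hr
        simpa [Submonoid.smul_def] using h1
      have hw0 : (p : L.W × E).1 = 0 := by
        have h1 : (r : R) • (p : L.W × E).1 = 0 := by
          rw [← Prod.smul_fst, hr']; rfl
        rcases smul_eq_zero.1 h1 with h0 | h0
        · exact absurd h0 (nonZeroDivisors.coe_ne_zero r)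
        · exact h0
      have hre : (r : R) • (p : L.W × E).2 = 0 := by
        rw [← Prod.smul_snd, hr']; rfl
      -- p.2 ∈ N
      have hpmem : (p : L.W × E) ∈ P := p.2
      have h2 : L.f (p : L.W × E).1 - N.mkQ (p : L.W × E).2 = 0 := hpmem
      rw [hw0, map_zero, zero_sub, neg_eq_zero, Submodule.mkQ_apply,
        Submodule.Quotient.mk_eq_zero] at h2
      obtain ⟨e', he'⟩ := (hmemN _).1 h2
      have he'tor : e' ∈ Submodule.torsion R E := by
        refine (Submodule.mem_torsion_iff e').mpr ⟨⟨(r : R) * π, ?_⟩, ?_⟩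
        · exact mul_mem r.2 (mem_nonZeroDivisors_of_ne_zero hπ.ne_zero)
        · show ((r : R) * π) • e' = 0
          rw [mul_smul, he']
          exact hre
      have he2 : π ^ n • (p : L.W × E).2 = 0 := by
        rw [← he', smul_smul, ← pow_succ]
        exact htor e' he'tor
      have hcoe : ((π ^ n • p : P) : L.W × E) = 0 := by
        rw [Submodule.coe_smul]
        ext
        · simp [hw0]
        · simp [he2]
      exact Subtype.ext hcoe
    obtain ⟨L'⟩ := ih P hPfin τ hPtor
    -- surjection P → E
    refine ⟨WeakLift.comp (ρ' := τ) (LinearMap.snd R L.W E ∘ₗ P.subtype) ?_ ?_ L'⟩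
    · intro e
      obtain ⟨w, hw⟩ := L.surjective (N.mkQ e)
      exact ⟨⟨(w, e), show L.f w - N.mkQ e = 0 by rw [hw, sub_self]⟩, rfl⟩
    · intro γ
      refine LinearMap.ext fun x => ?_
      show ((LinearMap.prodMap (L.σ γ) (ρ γ)) (x : L.W × E)).2 = ρ γ (x : L.W × E).2
      simp


/-- If every representation of `Γ` on a finitely generated `R`-module killed by the
uniformizer `π` admits a weak lift, then every representation of `Γ` on a finitely
generated `R`-module admits a weak lift. -/
theorem stmt3 {R : Type} [CommRing R] [IsDomain R] [IsDiscreteValuationRing R]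
    (π : R) (hπ : Irreducible π) (Γ : Type) [Group Γ]
    (h : ∀ (V : Type) [AddCommGroup V] [Module R V], Module.Finite R V →
      (∀ v : V, π • v = 0) → ∀ ρ : Representation R Γ V, Nonempty (WeakLift R Γ V ρ)) :
    ∀ (E : Type) [AddCommGroup E] [Module R E], Module.Finite R E →
      ∀ ρ : Representation R Γ E, Nonempty (WeakLift R Γ E ρ) := by
  intro E _ _ hfin ρ
  haveI : IsNoetherian R E := isNoetherian_of_isNoetherianRing_of_finite R E
  have hfg : (Submodule.torsion R E).FG := IsNoetherian.noetherian _
  obtain ⟨s, hs⟩ := hfg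
  have hex : ∀ x : E, ∃ k : ℕ, x ∈ s → π ^ k • x = 0 := by
    intro x
    by_cases hx : x ∈ s
    · have hxt : x ∈ Submodule.torsion R E := hs ▸ Submodule.subset_span hx
      obtain ⟨r, hr⟩ := (Submodule.mem_torsion_iff x).1 hxt
      obtain ⟨k, u, hu⟩ := IsDiscreteValuationRing.eq_unit_mul_pow_irreducible
        (nonZeroDivisors.coe_ne_zero r) hπ
      refine ⟨k, fun _ => ?_⟩
      have hr0 : (r : R) • x = 0 := by rw [← Submonoid.smul_def]; exact hr
      have h0 : (u : R) • (π ^ k • x) = 0 := by rw [smul_smul, ← hu]; exact hr0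
      have h2 := congrArg (fun z => ((u⁻¹ : Rˣ) : R) • z) h0
      simpa [smul_smul] using h2
    · exact ⟨0, fun hx' => absurd hx' hx⟩
  choose k hk using hex
  set n : ℕ := s.sup k with hn
  have htor : ∀ e ∈ Submodule.torsion R E, π ^ n • e = 0 := by
    have hle : Submodule.torsion R E ≤ LinearMap.ker ((π ^ n : R) • (LinearMap.id : E →ₗ[R] E)) := by
      rw [← hs]
      refine Submodule.span_le.2 fun x hx => ?_
      have hxs : x ∈ s := hx
      have hxk : π ^ n • x = 0 := by
        have hnk : k x ≤ n := Finset.le_sup hxs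
        have : π ^ n • x = π ^ (n - k x) • π ^ (k x) • x := by
          rw [smul_smul, ← pow_add, Nat.sub_add_cancel hnk]
        rw [this, hk x hxs, smul_zero]
      simpa [LinearMap.mem_ker] using hxk
    intro e he
    simpa [LinearMap.mem_ker] using hle he
  exact stmt3_key π hπ Γ h n E hfin ρ htor
end

section
/- Let R be a DVR with uniformizer π, Γ an abstract group, and E a Γ-representation on a finitely generated R-module such that the torsion submodule of E is killed by π (i.e., π·E_tors = 0, equivalently πE is torsion-free). If the quotient C = E/πE admits a Γ-equivariant surjection from a finitely generated torsion-free Γ-representation C̃, then the fiber product Ẽ = E ×_C C̃ (along the quotient map E → C and the surjection C̃ → C) is a finitely generated torsion-free R-module, and the projection Ẽ → E is a Γ-equivariant surjection. -/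
/-- Pull-back construction of weak lifts: if `E` is a f.g. representation of `Γ` whose
torsion is killed by `π`, `q : E → C` is the equivariant quotient by `πE`, and
`σ : C̃ → C` is an equivariant surjection from a f.g. torsion-free representation,
then the fiber product `Ẽ = E ×_C C̃` is f.g. torsion-free and projects equivariantly
and surjectively onto `E`. -/
theorem stmt4 {R : Type} [CommRing R] [IsDomain R] [IsDiscreteValuationRing R]
    (π : R) (hπ : Irreducible π) (Γ : Type) [Group Γ]
    (E : Type) [AddCommGroup E] [Module R E] [Module.Finite R E]
    (ρ : Representation R Γ E)
    (htors : ∀ e : E, (∃ r : R, r ≠ 0 ∧ r • e = 0) → π • e = 0)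
    (C : Type) [AddCommGroup C] [Module R C] (τ : Representation R Γ C)
    (q : E →ₗ[R] C) (hqsurj : Function.Surjective q)
    (hqker : LinearMap.ker q = LinearMap.range ((π : R) • (LinearMap.id : E →ₗ[R] E)))
    (hqequiv : ∀ γ : Γ, q ∘ₗ ρ γ = τ γ ∘ₗ q)
    (Ct : Type) [AddCommGroup Ct] [Module R Ct] [Module.Finite R Ct]
    [NoZeroSMulDivisors R Ct]
    (τt : Representation R Γ Ct)
    (σ : Ct →ₗ[R] C) (hσsurj : Function.Surjective σ)
    (hσequiv : ∀ γ : Γ, σ ∘ₗ τt γ = τ γ ∘ₗ σ) :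
    Module.Finite R
        (LinearMap.ker (q ∘ₗ LinearMap.fst R E Ct - σ ∘ₗ LinearMap.snd R E Ct)) ∧
    NoZeroSMulDivisors R
        (LinearMap.ker (q ∘ₗ LinearMap.fst R E Ct - σ ∘ₗ LinearMap.snd R E Ct)) ∧
    (∀ e : E, ∃ x ∈ LinearMap.ker (q ∘ₗ LinearMap.fst R E Ct - σ ∘ₗ LinearMap.snd R E Ct),
        x.1 = e) ∧
    (∀ γ : Γ, ∀ x ∈ LinearMap.ker (q ∘ₗ LinearMap.fst R E Ct - σ ∘ₗ LinearMap.snd R E Ct),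
        (ρ γ x.1, τt γ x.2) ∈
          LinearMap.ker (q ∘ₗ LinearMap.fst R E Ct - σ ∘ₗ LinearMap.snd R E Ct)) := by
  set K := LinearMap.ker (q ∘ₗ LinearMap.fst R E Ct - σ ∘ₗ LinearMap.snd R E Ct) with hK
  have hmem : ∀ x : E × Ct, x ∈ K ↔ q x.1 = σ x.2 := by
    intro x
    simp [hK, LinearMap.mem_ker, sub_eq_zero]
  refine ⟨?_, ?_, ?_, ?_⟩
  · have : IsNoetherian R (E × Ct) := inferInstance
    exact Module.Finite.iff_fg.mpr (IsNoetherian.noetherian K)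
  · refine ⟨fun {r x} h => ?_⟩
    by_cases hr : r = 0
    · exact Or.inl hr
    right
    have hx : r • (x : E × Ct) = 0 := by
      exact_mod_cast congrArg Subtype.val h
    have h1 : r • (x : E × Ct).1 = 0 := congrArg Prod.fst hx
    have h2 : r • (x : E × Ct).2 = 0 := congrArg Prod.snd hx
    have hc : (x : E × Ct).2 = 0 := by
      rcases eq_zero_or_eq_zero_of_smul_eq_zero h2 with h | h
      · exact absurd h hr
      · exact h
    have hq0 : q (x : E × Ct).1 = 0 := by
      rw [(hmem x).mp x.2, hc, map_zero]
    have : (x : E × Ct).1 ∈ LinearMap.range ((π : R) • (LinearMap.id : E →ₗ[R] E)) := by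
      rw [← hqker]; exact hq0
    obtain ⟨e', he'⟩ := this
    simp only [LinearMap.smul_apply, LinearMap.id_apply] at he'
    have hπe : π • (x : E × Ct).1 = 0 := htors _ ⟨r, hr, h1⟩
    have hπ2 : (π * π) • e' = 0 := by
      rw [mul_smul, he']; exact hπe
    have hπne : π * π ≠ 0 := mul_ne_zero hπ.ne_zero hπ.ne_zero
    have he0 : (x : E × Ct).1 = 0 := by
      rw [← he']; exact htors e' ⟨π * π, hπne, hπ2⟩
    ext
    · exact he0
    · exact hc
  · intro e
    obtain ⟨c, hc⟩ := hσsurj (q e)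
    exact ⟨(e, c), (hmem (e, c)).mpr hc.symm, rfl⟩
  · intro γ x hx
    rw [hmem]
    have h1 : q (ρ γ x.1) = τ γ (q x.1) := congrFun (congrArg DFunLike.coe (hqequiv γ)) x.1
    have h2 : σ (τt γ x.2) = τ γ (σ x.2) := congrFun (congrArg DFunLike.coe (hσequiv γ)) x.2
    simp only [h1, h2, (hmem x).mp hx]
end

section
/- Every free group Γ is Tannakian over any DVR R: for every representation V of Γ on a finitely generated R-module, there exists a representation Ṽ of Γ on a finitely generated torsion-free (equivalently free) R-module together with a Γ-equivariant surjection Ṽ → V. -/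
/-- Every free group is Tannakian over a DVR `R`: every representation on a finitely
generated `R`-module admits a weak lift. -/
theorem stmt5 {R : Type} [CommRing R] [IsDomain R] [IsDiscreteValuationRing R]
    (α : Type) :
    ∀ (E : Type) [AddCommGroup E] [Module R E], Module.Finite R E →
      ∀ ρ : Representation R (FreeGroup α) E,
        Nonempty (WeakLift R (FreeGroup α) E ρ) := by
  intro E _ _ hfin ρ
  obtain ⟨n, π, hπ⟩ := Module.Finite.exists_fin' R E
  set F := Fin n → R with hF
  -- lifts of ρ(of a) and ρ((of a)⁻¹) along π
  choose G hG using fun a : α =>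
    Module.projective_lifting_property π ((ρ (FreeGroup.of a)) ∘ₗ π) hπ
  choose H hH using fun a : α =>
    Module.projective_lifting_property π ((ρ (FreeGroup.of a)⁻¹) ∘ₗ π) hπ
  -- block matrices
  let fst := LinearMap.fst R F F
  let snd := LinearMap.snd R F F
  let M : α → Module.End R (F × F) := fun a =>
    LinearMap.prod ((G a) ∘ₗ fst + (G a * H a - 1) ∘ₗ snd) (fst + (H a) ∘ₗ snd)
  let N : α → Module.End R (F × F) := fun a =>
    LinearMap.prod ((H a) ∘ₗ fst + (1 - H a * G a) ∘ₗ snd) (-fst + (G a) ∘ₗ snd)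
  have hMN : ∀ a, M a * N a = 1 := by
    intro a
    apply LinearMap.ext
    rintro ⟨x, y⟩
    simp only [M, N, fst, snd, Module.End.mul_apply, LinearMap.prod_apply, Function.prod_apply,
      LinearMap.add_apply, LinearMap.comp_apply, LinearMap.sub_apply, Module.End.one_apply,
      LinearMap.neg_apply, LinearMap.fst_apply, LinearMap.snd_apply, map_add, map_neg, map_sub,
      Prod.mk.injEq]
    constructor <;> abel
  have hNM : ∀ a, N a * M a = 1 := by
    intro a
    apply LinearMap.ext
    rintro ⟨x, y⟩
    simp only [M, N, fst, snd, Module.End.mul_apply, LinearMap.prod_apply, Function.prod_apply,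
      LinearMap.add_apply, LinearMap.comp_apply, LinearMap.sub_apply, Module.End.one_apply,
      LinearMap.neg_apply, LinearMap.fst_apply, LinearMap.snd_apply, map_add, map_neg, map_sub,
      Prod.mk.injEq]
    constructor <;> abel
  let u : α → (Module.End R (F × F))ˣ := fun a => ⟨M a, N a, hMN a, hNM a⟩
  let σ : Representation R (FreeGroup α) (F × F) :=
    (Units.coeHom (Module.End R (F × F))).comp (FreeGroup.lift u)
  let f : (F × F) →ₗ[R] E := π ∘ₗ fst
  have hfM : ∀ a, f ∘ₗ M a = ρ (FreeGroup.of a) ∘ₗ f := by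
    intro a
    apply LinearMap.ext
    rintro ⟨x, y⟩
    have h1 := LinearMap.congr_fun (hG a) x
    have h2 := LinearMap.congr_fun (hG a) (H a y)
    have h3 := LinearMap.congr_fun (hH a) y
    have h4 : ρ (FreeGroup.of a) (ρ (FreeGroup.of a)⁻¹ (π y)) = π y := by
      have := LinearMap.congr_fun (ρ.map_mul (FreeGroup.of a) (FreeGroup.of a)⁻¹) (π y)
      simpa using this.symm
    simp only [f, M, fst, snd, LinearMap.comp_apply, LinearMap.prod_apply, Function.prod_apply,
      LinearMap.add_apply, LinearMap.sub_apply, Module.End.one_apply, Module.End.mul_apply,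
      LinearMap.fst_apply, LinearMap.snd_apply, map_add, map_sub] at *
    rw [h1, h2, h3, h4]
    abel
  have hfN : ∀ a, f ∘ₗ N a = ρ (FreeGroup.of a)⁻¹ ∘ₗ f := by
    intro a
    apply LinearMap.ext
    rintro ⟨x, y⟩
    have h1 := LinearMap.congr_fun (hH a) x
    have h2 := LinearMap.congr_fun (hH a) (G a y)
    have h3 := LinearMap.congr_fun (hG a) y
    have h4 : ρ (FreeGroup.of a)⁻¹ (ρ (FreeGroup.of a) (π y)) = π y := by
      have := LinearMap.congr_fun (ρ.map_mul (FreeGroup.of a)⁻¹ (FreeGroup.of a)) (π y)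
      simpa using this.symm
    simp only [f, N, fst, snd, LinearMap.comp_apply, LinearMap.prod_apply, Function.prod_apply,
      LinearMap.add_apply, LinearMap.sub_apply, Module.End.one_apply, Module.End.mul_apply,
      LinearMap.neg_apply, LinearMap.fst_apply, LinearMap.snd_apply, map_add, map_sub, map_neg] at *
    rw [h1, h2, h3, h4]
    abel
  have hequiv : ∀ γ : FreeGroup α, f ∘ₗ σ γ = ρ γ ∘ₗ f := by
    intro γ
    induction γ with
    | C1 => simp [map_one, Module.End.one_eq_id]
    | of a =>
      have : σ (FreeGroup.of a) = M a := by
        simp [σ, u, FreeGroup.lift_apply_of]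
      rw [this, hfM a]
    | inv_of a _ =>
      have : σ (FreeGroup.of a)⁻¹ = N a := by
        simp only [σ, MonoidHom.comp_apply, map_inv, FreeGroup.lift_apply_of]
        rfl
      rw [this, hfN a]
    | mul x y hx hy =>
      rw [map_mul, map_mul]
      calc f ∘ₗ (σ x * σ y) = (f ∘ₗ σ x) ∘ₗ σ y := rfl
        _ = (ρ x ∘ₗ f) ∘ₗ σ y := by rw [hx]
        _ = ρ x ∘ₗ (f ∘ₗ σ y) := rfl
        _ = ρ x ∘ₗ (ρ y ∘ₗ f) := by rw [hy]
        _ = (ρ x * ρ y) ∘ₗ f := rfl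
  exact ⟨{
    W := F × F
    finite := inferInstance
    torsionFree := by
      refine ⟨fun {c x} h => ?_⟩
      rcases x with ⟨x1, x2⟩
      simp only [Prod.smul_mk, Prod.mk_eq_zero, smul_eq_zero] at h ⊢
      tauto
    σ := σ
    f := f
    surjective := hπ.comp (fun p => ⟨(p, 0), rfl⟩)
    equivariant := hequiv }⟩
end

section
/- Let f: G → H be a morphism of flat affine group schemes over a DVR R such that the induced Hopf algebra map f*: R[H] → R[G] is injective. Let V be a representation of H on a finitely generated free R-module. Then an element v ∈ V is semi-invariant for the induced G-action if and only if it is semi-invariant for H; i.e., SI_H(V) = SI_G(V). -/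
open TensorProduct

variable {R : Type} [CommRing R]

/-- `ρ : V → V ⊗ A` is a coaction (comodule structure): counit and coassociativity. -/
def IsCoaction {A V : Type} [CommRing A] [Bialgebra R A]
    [AddCommGroup V] [Module R V] (ρ : V →ₗ[R] V ⊗[R] A) : Prop :=
  (∀ v : V, (TensorProduct.rid R V)
      ((TensorProduct.map LinearMap.id (Coalgebra.counit (R := R) (A := A))) (ρ v)) = v) ∧
  (∀ v : V, (TensorProduct.assoc R V A A)
      ((TensorProduct.map ρ (LinearMap.id : A →ₗ[R] A)) (ρ v)) =
    (TensorProduct.map (LinearMap.id : V →ₗ[R] V) (Coalgebra.comul (R := R) (A := A))) (ρ v))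

/-- `v` is semi-invariant for the coaction `ρ`: the span of `v` is a subcomodule. -/
def IsSemiInvariant {A V : Type} [CommRing A] [Algebra R A]
    [AddCommGroup V] [Module R V] (ρ : V →ₗ[R] V ⊗[R] A) (v : V) : Prop :=
  ∀ x ∈ Submodule.span R {v},
    ρ x ∈ LinearMap.range
      (TensorProduct.map (Submodule.span R {v}).subtype (LinearMap.id : A →ₗ[R] A))

section Aux

variable {V : Type} [AddCommGroup V] [Module R V]

/-- Characterization of semi-invariance: `ρ v = v ⊗ a` for some `a`. -/
lemma isSemiInvariant_iff' {A : Type} [CommRing A] [Algebra R A]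
    (ρ : V →ₗ[R] V ⊗[R] A) (v : V) :
    IsSemiInvariant ρ v ↔ ∃ a : A, ρ v = v ⊗ₜ[R] a := by
  constructor
  · intro h
    obtain ⟨t, ht⟩ := h v (Submodule.mem_span_singleton_self v)
    suffices H : ∃ a, (TensorProduct.map (Submodule.span R {v}).subtype
        (LinearMap.id : A →ₗ[R] A)) t = v ⊗ₜ[R] a by
      obtain ⟨a, ha⟩ := H; exact ⟨a, by rw [← ht, ha]⟩
    clear ht
    induction t using TensorProduct.induction_on with
    | zero => exact ⟨0, by simp⟩
    | tmul w a =>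
      obtain ⟨r, hr⟩ := Submodule.mem_span_singleton.mp w.2
      refine ⟨r • a, ?_⟩
      simp only [TensorProduct.map_tmul, LinearMap.id_coe, id_eq, Submodule.coe_subtype]
      rw [← hr, TensorProduct.smul_tmul]
    | add x y hx hy =>
      obtain ⟨a, ha⟩ := hx; obtain ⟨a', ha'⟩ := hy
      exact ⟨a + a', by rw [map_add, ha, ha', TensorProduct.tmul_add]⟩
  · rintro ⟨a, ha⟩ x hx
    obtain ⟨r, rfl⟩ := Submodule.mem_span_singleton.mp hx
    refine ⟨(⟨v, Submodule.mem_span_singleton_self v⟩ : Submodule.span R {v}) ⊗ₜ[R] (r • a), ?_⟩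
    simp only [TensorProduct.map_tmul, LinearMap.id_coe, id_eq, Submodule.coe_subtype,
      map_smul, ha, TensorProduct.tmul_smul]

variable {ι : Type} [Fintype ι] [DecidableEq ι] (b : Module.Basis ι R V)

/-- `i`-th coordinate map `V ⊗ M → M` w.r.t. a basis of `V`. -/
noncomputable def coordT (M : Type) [AddCommGroup M] [Module R M] (i : ι) :
    V ⊗[R] M →ₗ[R] M :=
  (TensorProduct.lid R M).toLinearMap ∘ₗ TensorProduct.map (b.coord i) LinearMap.id

@[simp] lemma coordT_tmul (M : Type) [AddCommGroup M] [Module R M] (i : ι) (x : V) (m : M) :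
    coordT b M i (x ⊗ₜ[R] m) = b.repr x i • m := by
  simp [coordT, Module.Basis.coord]

lemma sum_coordT (M : Type) [AddCommGroup M] [Module R M] (t : V ⊗[R] M) :
    ∑ i, b i ⊗ₜ[R] coordT b M i t = t := by
  induction t using TensorProduct.induction_on with
  | zero => simp
  | tmul x m =>
    calc ∑ i, b i ⊗ₜ[R] coordT b M i (x ⊗ₜ[R] m)
        = ∑ i, (b.repr x i • b i) ⊗ₜ[R] m := by
          simp [TensorProduct.smul_tmul]
      _ = (∑ i, b.repr x i • b i) ⊗ₜ[R] m := (TensorProduct.sum_tmul _ _ _).symm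
      _ = x ⊗ₜ[R] m := by rw [Module.Basis.sum_repr]
  | add x y hx hy =>
    simp only [map_add, TensorProduct.tmul_add, Finset.sum_add_distrib, hx, hy]

lemma coordT_natural {M N : Type} [AddCommGroup M] [Module R M] [AddCommGroup N] [Module R N]
    (g : M →ₗ[R] N) (i : ι) (t : V ⊗[R] M) :
    coordT b N i ((TensorProduct.map LinearMap.id g) t) = g (coordT b M i t) := by
  induction t using TensorProduct.induction_on with
  | zero => simp
  | tmul x m => simp
  | add x y hx hy => simp [map_add, hx, hy]

lemma coordT_counit {A : Type} [CommRing A] [Bialgebra R A] (j : ι) (t : V ⊗[R] A) :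
    b.repr ((TensorProduct.rid R V)
      ((TensorProduct.map LinearMap.id (Coalgebra.counit (R := R) (A := A))) t)) j =
    Coalgebra.counit (R := R) (coordT b A j t) := by
  induction t using TensorProduct.induction_on with
  | zero => simp
  | tmul x a => simp [mul_comm]
  | add x y hx hy => simp [map_add, hx, hy]

lemma coordT_assoc {A : Type} [CommRing A] [Algebra R A]
    (σ : V →ₗ[R] V ⊗[R] A) (j : ι) (t : V ⊗[R] A) :
    coordT b (A ⊗[R] A) j ((TensorProduct.assoc R V A A)
        ((TensorProduct.map σ (LinearMap.id : A →ₗ[R] A)) t)) =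
    (TensorProduct.map (coordT b A j ∘ₗ σ) (LinearMap.id : A →ₗ[R] A)) t := by
  have key : ∀ (s : V ⊗[R] A) (α : A),
      coordT b (A ⊗[R] A) j ((TensorProduct.assoc R V A A) (s ⊗ₜ[R] α)) =
        coordT b A j s ⊗ₜ[R] α := by
    intro s α
    induction s using TensorProduct.induction_on with
    | zero => simp
    | tmul x a => simp [TensorProduct.smul_tmul']
    | add x y hx hy => simp [TensorProduct.add_tmul, hx, hy]
  induction t using TensorProduct.induction_on with
  | zero => simp
  | tmul x a => simpa using key (σ x) a
  | add x y hx hy => simp [map_add, hx, hy]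

end Aux

/-- In a DVR, among finitely many elements (not all zero or not) there is one dividing all. -/
lemma exists_dvd_all [IsDomain R] [IsDiscreteValuationRing R] {ι : Type} [Fintype ι] [Nonempty ι]
    (c : ι → R) : ∃ j, ∀ i, c j ∣ c i := by
  obtain ⟨j, -, hj⟩ := Finset.exists_min_image Finset.univ
    (fun i => IsDiscreteValuationRing.addVal R (c i)) ⟨Classical.arbitrary ι, Finset.mem_univ _⟩
  exact ⟨j, fun i => (IsDiscreteValuationRing.addVal_le_iff_dvd).mp (hj i (Finset.mem_univ i))⟩

lemma smulRegular_of_flat [IsDomain R] {A : Type} [AddCommGroup A] [Module R A]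
    [Module.Flat R A] {c : R} (hc : c ≠ 0) : IsSMulRegular A c := by
  have h : IsSMulRegular R c := fun x y hxy => by
    simpa [smul_eq_mul] using mul_left_cancel₀ hc hxy
  have h2 : IsSMulRegular (A ⊗[R] R) c := h.lTensor A
  exact h2.of_injective (TensorProduct.rid R A).symm.toLinearMap
    (TensorProduct.rid R A).symm.injective

/-- Let `f : G → H` correspond to an injective map of flat Hopf algebras
`f* : R[H] = A → R[G] = B` over a DVR `R`, and let `V` be a representation of `H`
on a finitely generated free `R`-module, with coaction `σ`.  Then `v ∈ V` is
semi-invariant for the induced `G`-coaction `(id ⊗ f*) ∘ σ` iff it is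
semi-invariant for `H`. -/
theorem stmt8 [IsDomain R] [IsDiscreteValuationRing R]
    {A B V : Type} [CommRing A] [HopfAlgebra R A] [CommRing B] [HopfAlgebra R B]
    [Module.Flat R A] [Module.Flat R B]
    (f : A →ₐc[R] B) (hf : Function.Injective f)
    [AddCommGroup V] [Module R V] [Module.Finite R V] [Module.Free R V]
    (σ : V →ₗ[R] V ⊗[R] A) (hσ : IsCoaction σ) (v : V) :
    IsSemiInvariant ((TensorProduct.map (LinearMap.id : V →ₗ[R] V) f.toLinearMap) ∘ₗ σ) v ↔
      IsSemiInvariant σ v := by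
  rw [isSemiInvariant_iff', isSemiInvariant_iff']
  constructor
  · rintro ⟨β, hβ⟩
    -- set up basis and coordinates
    classical
    set ιV := Module.Free.ChooseBasisIndex R V with hιV
    let b : Module.Basis ιV R V := Module.Free.chooseBasis R V
    by_cases hv : v = 0
    · exact ⟨0, by simp [hv]⟩
    -- nonempty index type
    have hrv : ∃ i, b.repr v i ≠ 0 := by
      by_contra h
      push_neg at h
      exact hv (b.repr.map_eq_zero_iff.mp (Finsupp.ext fun i => h i))
    obtain ⟨i₀, hi₀⟩ := hrv
    haveI : Nonempty ιV := ⟨i₀⟩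
    set c : ιV → R := fun i => b.repr v i with hc
    set a : ιV → A := fun i => coordT b A i (σ v) with ha
    -- counit gives ε (a i) = c i
    have hεa : ∀ i, Coalgebra.counit (R := R) (a i) = c i := by
      intro i
      rw [ha, ← coordT_counit b i (σ v), hσ.1 v]
    -- hypothesis gives f (a i) = c i • β
    have hfa : ∀ i, f (a i) = c i • β := by
      intro i
      have h1 : coordT b B i ((TensorProduct.map LinearMap.id f.toLinearMap) (σ v))
          = f (a i) := coordT_natural b f.toLinearMap i (σ v)
      have h2 : ((TensorProduct.map (LinearMap.id : V →ₗ[R] V) f.toLinearMap) ∘ₗ σ) v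
          = v ⊗ₜ[R] β := hβ
      simp only [LinearMap.comp_apply] at h2
      rw [h2] at h1
      simpa [hc] using h1.symm
    -- pick j with c j dividing all c i
    obtain ⟨j, hj⟩ := exists_dvd_all c
    have hcj : c j ≠ 0 := by
      intro h0
      apply hv
      have : ∀ i, c i = 0 := fun i => by
        obtain ⟨d, hd⟩ := hj i; rw [hd, h0, zero_mul]
      have := b.repr.injective (a₁ := v) (a₂ := 0) ?_
      · exact this
      · ext i; simpa [hc] using this i
    -- a i = d i • a j
    choose d hd using hj
    have had : ∀ i, a i = d i • a j := by
      intro i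
      have h1 : f (c j • a i) = f (c i • a j) := by
        rw [map_smul, map_smul, hfa, hfa, smul_smul, smul_smul, mul_comm]
      have h2 : c j • a i = c i • a j := hf h1
      have h3 : c j • a i = c j • (d i • a j) := by
        rw [h2, hd i, mul_smul]
      exact smulRegular_of_flat hcj h3
    -- coassociativity: Δ (a j) = u ⊗ a j
    set u : A := ∑ i, d i • coordT b A j (σ (b i)) with hu
    have hΔ : Coalgebra.comul (R := R) (a j) = u ⊗ₜ[R] a j := by
      have h1 : coordT b (A ⊗[R] A) j ((TensorProduct.map (LinearMap.id : V →ₗ[R] V)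
          (Coalgebra.comul (R := R) (A := A))) (σ v)) = Coalgebra.comul (R := R) (a j) :=
        coordT_natural b _ j (σ v)
      rw [← hσ.2 v, coordT_assoc b σ j (σ v)] at h1
      rw [← h1, ← sum_coordT b A (σ v), map_sum]
      simp only [TensorProduct.map_tmul, LinearMap.comp_apply, LinearMap.id_coe, id_eq]
      calc ∑ i, coordT b A j (σ (b i)) ⊗ₜ[R] coordT b A i (σ v)
          = ∑ i, (d i • coordT b A j (σ (b i))) ⊗ₜ[R] a j := by
            refine Finset.sum_congr rfl fun i _ => ?_
            rw [show coordT b A i (σ v) = a i from rfl, had i,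
              TensorProduct.tmul_smul, TensorProduct.smul_tmul']
          _ = u ⊗ₜ[R] a j := by rw [hu, TensorProduct.sum_tmul]
    -- apply counit on the right: a j = c j • u
    have haj : a j = c j • u := by
      have h1 := Coalgebra.lTensor_counit_comul (R := R) (a j)
      rw [hΔ] at h1
      have h2 : (TensorProduct.rid R A) ((Coalgebra.counit (R := R)).lTensor A
          (u ⊗ₜ[R] a j)) = (TensorProduct.rid R A) (a j ⊗ₜ[R] (1 : R)) := by rw [h1]
      simpa [LinearMap.lTensor_tmul, hεa j, mul_comm] using h2.symm
    refine ⟨u, ?_⟩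
    rw [← sum_coordT b A (σ v)]
    calc ∑ i, b i ⊗ₜ[R] coordT b A i (σ v)
        = ∑ i, (c i • b i) ⊗ₜ[R] u := by
          refine Finset.sum_congr rfl fun i _ => ?_
          rw [show coordT b A i (σ v) = a i from rfl, had i, haj, smul_smul, mul_comm,
            ← hd i, TensorProduct.smul_tmul]
      _ = (∑ i, c i • b i) ⊗ₜ[R] u := (TensorProduct.sum_tmul _ _ _).symm
      _ = v ⊗ₜ[R] u := by rw [hc]; rw [Module.Basis.sum_repr]
  · rintro ⟨a, ha⟩
    exact ⟨f a, by simp [LinearMap.comp_apply, ha]; rfl⟩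
end

section
/- Let f: G → H be a morphism of flat affine group schemes over a complete DVR R with injective induced Hopf algebra map R[H] → R[G]. If G is prudent, then H is prudent. -/
open TensorProduct

variable {R : Type} [CommRing R]

/-- The reduction of `v` modulo `π^(n+1) V` is semi-invariant: its span is a subcomodule
of `V/π^(n+1)V`, expressed via preimages in `V` and `V ⊗ A`. -/
def IsSemiInvariantMod {A V : Type} [CommRing A] [Algebra R A]
    [AddCommGroup V] [Module R V] (π : R) (ρ : V →ₗ[R] V ⊗[R] A) (v : V) (n : ℕ) : Prop :=
  ∀ x ∈ Submodule.span R {v} ⊔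
      LinearMap.range ((π ^ (n + 1)) • (LinearMap.id : V →ₗ[R] V)),
    ρ x ∈ LinearMap.range
        (TensorProduct.map (Submodule.span R {v}).subtype (LinearMap.id : A →ₗ[R] A)) ⊔
      LinearMap.range ((π ^ (n + 1)) • (LinearMap.id : V ⊗[R] A →ₗ[R] V ⊗[R] A))

/-- A flat affine group scheme with Hopf algebra `A` over `R` is prudent if, in every
representation on a finitely generated free `R`-module, every vector whose reduction
modulo `π^(n+1)` is semi-invariant for all `n` is itself semi-invariant. -/
def Prudent (π : R) (A : Type) [CommRing A] [Bialgebra R A] : Prop :=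
  ∀ (V : Type) [AddCommGroup V] [Module R V], Module.Finite R V → Module.Free R V →
    ∀ ρ : V →ₗ[R] V ⊗[R] A, IsCoaction ρ →
      ∀ v : V, (∀ n : ℕ, IsSemiInvariantMod π ρ v n) → IsSemiInvariant ρ v

lemma bialgHom_toCoalgHom_apply {A B : Type} [CommRing A] [CommRing B]
    [Bialgebra R A] [Bialgebra R B] (f : A →ₐc[R] B) (a : A) :
    f.toCoalgHom a = f a := rfl

lemma range_span_singleton {A V : Type} [CommRing A] [Algebra R A]
    [AddCommGroup V] [Module R V] (v : V) (y : V ⊗[R] A) :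
    y ∈ LinearMap.range
      (TensorProduct.map (Submodule.span R {v}).subtype (LinearMap.id : A →ₗ[R] A)) ↔
    ∃ a : A, y = v ⊗ₜ[R] a := by
  constructor
  · rintro ⟨z, rfl⟩
    induction z using TensorProduct.induction_on with
    | zero => exact ⟨0, by simp⟩
    | tmul s a =>
      obtain ⟨s, hs⟩ := s
      rw [Submodule.mem_span_singleton] at hs
      obtain ⟨r, rfl⟩ := hs
      refine ⟨r • a, ?_⟩
      simp [TensorProduct.smul_tmul]
    | add z1 z2 h1 h2 =>
      obtain ⟨a1, h1⟩ := h1; obtain ⟨a2, h2⟩ := h2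
      exact ⟨a1 + a2, by rw [map_add, h1, h2, TensorProduct.tmul_add]⟩
  · rintro ⟨a, rfl⟩
    exact ⟨⟨v, Submodule.mem_span_singleton_self v⟩ ⊗ₜ a, rfl⟩

/-- If `f : G → H` is a morphism of flat affine group schemes over a complete DVR whose
induced Hopf algebra map `f* : R[H] = A → R[G] = B` is injective, and `G` is prudent,
then `H` is prudent. -/
theorem stmt9 [IsDomain R] [IsDiscreteValuationRing R]
    (π : R) (hπ : Irreducible π) [IsAdicComplete (Ideal.span {π}) R]
    {A B : Type} [CommRing A] [HopfAlgebra R A] [CommRing B] [HopfAlgebra R B]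
    [Module.Flat R A] [Module.Flat R B]
    (f : A →ₐc[R] B) (hf : Function.Injective f)
    (hG : Prudent π B) : Prudent π A := by
  intro V _ _ hfin hfree ρ hρ v hmod
  classical
  set F : V ⊗[R] A →ₗ[R] V ⊗[R] B :=
    TensorProduct.map LinearMap.id f.toLinearMap with hF
  set ρ' : V →ₗ[R] V ⊗[R] B := F ∘ₗ ρ with hρ'def
  have hρ'app : ∀ x : V, ρ' x = F (ρ x) := fun _ => rfl
  -- ρ' is a coaction
  have key1 : ∀ (w : V ⊗[R] A) (a : A),
      (TensorProduct.assoc R V B B) ((F w) ⊗ₜ[R] f a)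
        = TensorProduct.map LinearMap.id (TensorProduct.map f.toLinearMap f.toLinearMap)
            ((TensorProduct.assoc R V A A) (w ⊗ₜ[R] a)) := by
    intro w a
    induction w using TensorProduct.induction_on with
    | zero => simp
    | tmul x a' => simp [hF, CoalgHom.coe_toLinearMap, bialgHom_toCoalgHom_apply]
    | add w1 w2 h1 h2 => simp only [map_add, TensorProduct.add_tmul, h1, h2]
  have key2 : ∀ w : V ⊗[R] A,
      (TensorProduct.assoc R V B B)
          ((TensorProduct.map ρ' (LinearMap.id : B →ₗ[R] B)) (F w))
        = TensorProduct.map LinearMap.id (TensorProduct.map f.toLinearMap f.toLinearMap)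
            ((TensorProduct.assoc R V A A)
              ((TensorProduct.map ρ (LinearMap.id : A →ₗ[R] A)) w)) := by
    intro w
    induction w using TensorProduct.induction_on with
    | zero => simp
    | tmul x a =>
      have : (TensorProduct.map ρ' (LinearMap.id : B →ₗ[R] B)) (F (x ⊗ₜ a))
          = (F (ρ x)) ⊗ₜ[R] f a := by simp [hF, hρ'app, CoalgHom.coe_toLinearMap, bialgHom_toCoalgHom_apply]
      rw [this]
      have : (TensorProduct.map ρ (LinearMap.id : A →ₗ[R] A)) (x ⊗ₜ a)
          = (ρ x) ⊗ₜ[R] a := by simp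
      rw [this, key1]
    | add w1 w2 h1 h2 => simp only [map_add, h1, h2]
  have key3 : ∀ w : V ⊗[R] A,
      TensorProduct.map LinearMap.id (TensorProduct.map f.toLinearMap f.toLinearMap)
          ((TensorProduct.map (LinearMap.id : V →ₗ[R] V)
            (Coalgebra.comul (R := R) (A := A))) w)
        = (TensorProduct.map (LinearMap.id : V →ₗ[R] V)
            (Coalgebra.comul (R := R) (A := B))) (F w) := by
    intro w
    induction w using TensorProduct.induction_on with
    | zero => simp
    | tmul x a => simp [hF, CoalgHom.coe_toLinearMap, bialgHom_toCoalgHom_apply]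
    | add w1 w2 h1 h2 => simp only [map_add, h1, h2]
  have key0 : ∀ w : V ⊗[R] A,
      (TensorProduct.map (LinearMap.id : V →ₗ[R] V)
          (Coalgebra.counit (R := R) (A := B))) (F w)
        = (TensorProduct.map (LinearMap.id : V →ₗ[R] V)
            (Coalgebra.counit (R := R) (A := A))) w := by
    intro w
    induction w using TensorProduct.induction_on with
    | zero => simp
    | tmul x a => simp [hF, CoalgHom.coe_toLinearMap, bialgHom_toCoalgHom_apply]
    | add w1 w2 h1 h2 => simp only [map_add, h1, h2]
  have hρ'coact : IsCoaction ρ' := by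
    constructor
    · intro x
      rw [hρ'app, key0, hρ.1]
    · intro x
      rw [hρ'app, key2, hρ.2, key3]
  -- the mod-π^(n+1) semi-invariance transfers to ρ'
  have hFrange : ∀ c0 : (Submodule.span R {v}) ⊗[R] A,
      (TensorProduct.map (Submodule.span R {v}).subtype (LinearMap.id : B →ₗ[R] B))
          ((TensorProduct.map LinearMap.id f.toLinearMap) c0)
        = F ((TensorProduct.map (Submodule.span R {v}).subtype
            (LinearMap.id : A →ₗ[R] A)) c0) := by
    intro c0
    induction c0 using TensorProduct.induction_on with
    | zero => simp
    | tmul s a => simp [hF, CoalgHom.coe_toLinearMap, bialgHom_toCoalgHom_apply]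
    | add z1 z2 h1 h2 => simp only [map_add, Finsupp.add_apply, h1, h2]
  have hmod' : ∀ n : ℕ, IsSemiInvariantMod π ρ' v n := by
    intro n x hx
    obtain ⟨p, hp, q, hq, hpq⟩ := Submodule.mem_sup.mp (hmod n x hx)
    refine Submodule.mem_sup.mpr ⟨F p, ?_, F q, ?_, ?_⟩
    · obtain ⟨c0, rfl⟩ := hp
      exact ⟨(TensorProduct.map LinearMap.id f.toLinearMap) c0, hFrange c0⟩
    · obtain ⟨z, rfl⟩ := hq
      exact ⟨F z, by simp⟩
    · rw [← map_add, hpq, hρ'app]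
  -- apply prudence of G
  have hsi' : IsSemiInvariant ρ' v := hG V hfin hfree ρ' hρ'coact v hmod'
  -- now prove semi-invariance for ρ
  intro x hx
  rw [Submodule.mem_span_singleton] at hx
  obtain ⟨r, rfl⟩ := hx
  rw [map_smul]
  refine Submodule.smul_mem _ r ?_
  rw [range_span_singleton]
  by_cases hv : v = 0
  · exact ⟨0, by simp [hv]⟩
  haveI := hfin; haveI := hfree
  set ι := Module.Free.ChooseBasisIndex R V with hι
  set e : Module.Basis ι R V := Module.Free.chooseBasis R V with he
  set φ : V ⊗[R] A ≃ₗ[R] (ι →₀ A) :=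
    (TensorProduct.congr e.repr (LinearEquiv.refl R A)).trans
      (TensorProduct.finsuppScalarLeft R A ι) with hφdef
  set ψ : V ⊗[R] B ≃ₗ[R] (ι →₀ B) :=
    (TensorProduct.congr e.repr (LinearEquiv.refl R B)).trans
      (TensorProduct.finsuppScalarLeft R B ι) with hψdef
  have hφ : ∀ (w : V) (a : A) (i : ι), φ (w ⊗ₜ[R] a) i = e.repr w i • a := by
    intro w a i
    simp [hφdef, TensorProduct.congr_tmul]
  have hψ : ∀ (w : V) (b : B) (i : ι), ψ (w ⊗ₜ[R] b) i = e.repr w i • b := by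
    intro w b i
    simp [hψdef, TensorProduct.congr_tmul]
  have hψF : ∀ (z : V ⊗[R] A) (i : ι), ψ (F z) i = f (φ z i) := by
    intro z i
    induction z using TensorProduct.induction_on with
    | zero => simp
    | tmul x a =>
      have h1 : F (x ⊗ₜ a) = x ⊗ₜ[R] (f a) := by
        simp [hF, CoalgHom.coe_toLinearMap, bialgHom_toCoalgHom_apply]
      rw [h1, hψ, hφ, map_smul]
    | add z1 z2 h1 h2 => simp only [map_add, Finsupp.add_apply, h1, h2]
  set c : ι →₀ R := e.repr v with hc
  -- the semi-invariance of v for ρ'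
  have hb' := hsi' v (Submodule.mem_span_singleton_self v)
  rw [range_span_singleton] at hb'
  obtain ⟨b, hb⟩ := hb'
  have hfα : ∀ i : ι, f (φ (ρ v) i) = c i • b := by
    intro i
    rw [← hψF, ← hρ'app, hb, hψ]
  -- valuation bookkeeping
  have hc0 : c ≠ 0 := fun h => hv (by
    apply e.repr.injective
    rw [← hc, h, map_zero])
  have hsupp : c.support.Nonempty := Finsupp.support_nonempty_iff.mpr hc0
  have hrep : ∀ i : ι, ∃ (n : ℕ) (u : Rˣ), c i ≠ 0 → c i = u * π ^ n := by
    intro i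
    by_cases h : c i = 0
    · exact ⟨0, 1, fun h' => absurd h h'⟩
    · obtain ⟨n, u, hu⟩ := IsDiscreteValuationRing.eq_unit_mul_pow_irreducible h hπ
      exact ⟨n, u, fun _ => hu⟩
  choose N U hNU using hrep
  set K : ℕ := (c.support.image N).min' (hsupp.image N) with hK
  obtain ⟨i0, hi0s, hi0⟩ := Finset.mem_image.mp (Finset.min'_mem _ (hsupp.image N))
  rw [← hK] at hi0
  set u : Rˣ := U i0 with hu
  have hci0 : c i0 = (u : R) * π ^ K := by
    rw [← hi0]; exact hNU i0 (Finsupp.mem_support_iff.mp hi0s)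
  have hdvd : ∀ i : ι, π ^ K ∣ c i := by
    intro i
    by_cases h : c i = 0
    · simp [h]
    · rw [hNU i h]
      exact Dvd.dvd.mul_left
        (pow_dvd_pow π (Finset.min'_le _ _
          (Finset.mem_image_of_mem N (Finsupp.mem_support_iff.mpr h)))) _
  -- the mod condition at level K for ρ itself
  obtain ⟨p, hp, q, hq, hpq⟩ := Submodule.mem_sup.mp
    (hmod K v (Submodule.mem_sup_left (Submodule.mem_span_singleton_self v)))
  rw [range_span_singleton] at hp
  obtain ⟨t, rfl⟩ := hp
  obtain ⟨z, rfl⟩ := hq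
  have hρv : ρ v = v ⊗ₜ[R] t + π ^ (K + 1) • z := by
    rw [← hpq]; simp
  have hcoord : ∀ i : ι, φ (ρ v) i = c i • t + π ^ (K + 1) • (φ z i) := by
    intro i
    rw [hρv, map_add, map_smul, Finsupp.add_apply, Finsupp.smul_apply, hφ]
  set a' : A := ((u⁻¹ : Rˣ) : R) • φ (ρ v) i0 with ha'def
  set a'' : A := t + π • (((u⁻¹ : Rˣ) : R) • φ z i0) with ha''def
  have ha' : a' = π ^ K • a'' := by
    rw [ha'def, hcoord i0, ha''def]
    simp only [smul_add, smul_smul]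
    congr 1
    · congr 1
      rw [hci0, ← mul_assoc, Units.inv_mul, one_mul]
    · congr 1
      ring
  have key : ∀ i : ι, φ (ρ v) i = c i • a'' := by
    intro i
    obtain ⟨d, hd⟩ := hdvd i
    have h1 : f ((u : R) • φ (ρ v) i) = f (d • φ (ρ v) i0) := by
      rw [map_smul, map_smul, hfα, hfα, smul_smul, smul_smul]
      congr 1
      rw [hd, hci0]; ring
    have h2 := hf h1
    calc φ (ρ v) i = ((u⁻¹ : Rˣ) : R) • ((u : R) • φ (ρ v) i) := by
          rw [smul_smul, Units.inv_mul, one_smul]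
      _ = ((u⁻¹ : Rˣ) : R) • (d • φ (ρ v) i0) := by rw [h2]
      _ = d • a' := by rw [ha'def, smul_comm]
      _ = c i • a'' := by rw [ha', smul_smul, hd, mul_comm]
  refine ⟨a'', ?_⟩
  apply φ.injective
  ext i
  rw [key i, hφ v a'' i]
end

section
/- Let R be a complete DVR with uniformizer π, Γ an abstract group, and V a finitely generated free R-module with an R-linear Γ-action. If v ∈ V is such that for every n ≥ 0, the submodule R·v̄ ⊆ V/π^{n+1}V spanned by the reduction v̄ of v is Γ-stable, then R·v ⊆ V is Γ-stable. -/
/-- Hausdorff property for free modules over a π-adically complete (hence Hausdorff) ring. -/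
lemma haus_free_aux {R : Type} [CommRing R] (π : R)
    [IsAdicComplete (Ideal.span {π}) R]
    (V : Type) [AddCommGroup V] [Module R V] [Module.Free R V]
    (x : V) (hx : ∀ m : ℕ, ∃ y : V, x = π ^ m • y) : x = 0 := by
  classical
  let b := Module.Free.chooseBasis R V
  apply b.repr.injective
  ext i
  simp only [map_zero, Finsupp.coe_zero, Pi.zero_apply]
  refine IsHausdorff.haus (inferInstance : IsHausdorff (Ideal.span {π}) R) _ (fun m => ?_)
  rw [SModEq.zero, Ideal.span_singleton_pow, smul_eq_mul, Ideal.mul_top,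
    Ideal.mem_span_singleton]
  obtain ⟨y, rfl⟩ := hx m
  exact ⟨b.repr y i, by simp⟩

/-- Over a complete DVR `R` with uniformizer `π`: if `Γ` acts `R`-linearly on a finitely
generated free `R`-module `V` and `v ∈ V` is such that for every `n` the span of the
reduction of `v` in `V/π^(n+1)V` is `Γ`-stable, then `R·v` is `Γ`-stable.
(The Tannakian envelope of an abstract group is prudent.) -/
theorem stmt10 {R : Type} [CommRing R] [IsDomain R] [IsDiscreteValuationRing R]
    (π : R) (hπ : Irreducible π) [IsAdicComplete (Ideal.span {π}) R]
    (Γ : Type) [Group Γ]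
    (V : Type) [AddCommGroup V] [Module R V] [Module.Finite R V] [Module.Free R V]
    (ρ : Representation R Γ V) (v : V)
    (h : ∀ (n : ℕ) (γ : Γ),
      Submodule.map (ρ γ)
          (Submodule.span R {v} ⊔
            LinearMap.range ((π ^ (n + 1)) • (LinearMap.id : V →ₗ[R] V))) ≤
        Submodule.span R {v} ⊔
          LinearMap.range ((π ^ (n + 1)) • (LinearMap.id : V →ₗ[R] V))) :
    ∀ γ : Γ, Submodule.map (ρ γ) (Submodule.span R {v}) ≤ Submodule.span R {v} := by
  classical
  intro γ
  rw [Submodule.map_span, Set.image_singleton, Submodule.span_singleton_le_iff_mem]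
  by_cases hv : v = 0
  · subst hv; simp
  -- unpack hypothesis: for every n, (ρ γ) v = a • v + π^(n+1) • y
  have hw : ∀ n : ℕ, ∃ a : R, ∃ y : V, ρ γ v = a • v + π ^ (n + 1) • y := by
    intro n
    have h1 : ρ γ v ∈ Submodule.span R {v} ⊔
        LinearMap.range ((π ^ (n + 1)) • (LinearMap.id : V →ₗ[R] V)) :=
      h n γ ⟨v, Submodule.mem_sup_left (Submodule.mem_span_singleton_self v), rfl⟩
    rcases Submodule.mem_sup.mp h1 with ⟨y, hy, z, hz, hsum⟩
    rcases Submodule.mem_span_singleton.mp hy with ⟨a, rfl⟩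
    rcases hz with ⟨t, ht⟩
    refine ⟨a, t, ?_⟩
    rw [← hsum, ← ht]
    simp
  choose a y hay using hw
  have hπ0 : π ≠ 0 := hπ.ne_zero
  -- pick a nonzero coordinate of v
  let b := Module.Free.chooseBasis R V
  have hbv : b.repr v ≠ 0 := fun hc => hv (by simpa using b.repr.injective (by simpa using hc))
  obtain ⟨i, hi⟩ : ∃ i, b.repr v i ≠ 0 := by
    by_contra hc
    push_neg at hc
    exact hbv (Finsupp.ext hc)
  obtain ⟨k, u, hu⟩ := IsDiscreteValuationRing.eq_unit_mul_pow_irreducible hi hπ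
  -- key divisibility: for p ≤ q, π^(p+1-k)... rather: π^(m+1) ∣ a (m+k) - a (n+k) for m ≤ n
  have key : ∀ p q : ℕ, p ≤ q → (π : R) ^ (p + 1) ∣ (a p - a q) * b.repr v i := by
    intro p q hpq
    have : (a p - a q) • v = π ^ (q + 1) • y q - π ^ (p + 1) • y p := by
      have h1 := hay p
      have h2 := hay q
      rw [sub_smul]
      have : a p • v + π ^ (p + 1) • y p = a q • v + π ^ (q + 1) • y q := by
        rw [← h1, ← h2]
      linear_combination (norm := abel) this
    have hcoord := congrArg (fun z => b.repr z i) this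
    simp only [map_smul, map_sub, Finsupp.smul_apply, Finsupp.sub_apply, smul_eq_mul] at hcoord
    rw [hcoord]
    exact dvd_sub (Dvd.dvd.mul_right (pow_dvd_pow π (by omega)) _)
      (Dvd.dvd.mul_right dvd_rfl _)
  have key2 : ∀ m n : ℕ, m ≤ n → (π : R) ^ m ∣ a (m + k) - a (n + k) := by
    intro m n hmn
    have := key (m + k) (n + k) (by omega)
    rw [hu] at this
    obtain ⟨t, ht⟩ := this
    have hcancel : (a (m + k) - a (n + k)) * ↑u = π ^ (m + 1) * t := by
      have hπk : (π : R) ^ k ≠ 0 := pow_ne_zero _ hπ0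
      apply mul_right_cancel₀ hπk
      calc (a (m + k) - a (n + k)) * ↑u * π ^ k
          = (a (m + k) - a (n + k)) * (↑u * π ^ k) := by ring
        _ = π ^ (m + k + 1) * t := ht
        _ = π ^ (m + 1) * t * π ^ k := by ring
    have : a (m + k) - a (n + k) = π ^ (m + 1) * (t * ↑u⁻¹) := by
      have := congrArg (fun z => z * (↑u⁻¹ : R)) hcancel
      simpa [mul_assoc, Units.mul_inv_cancel_right] using this
    exact dvd_trans (pow_dvd_pow π (by omega)) ⟨t * ↑u⁻¹, this⟩
  -- apply precompleteness of R to get the limit L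
  have hprec : IsPrecomplete (Ideal.span {π}) R := IsAdicComplete.toIsPrecomplete
  obtain ⟨L, hL⟩ := hprec.prec (f := fun n => a (n + k)) (by
    intro m n hmn
    rw [SModEq.sub_mem, Ideal.span_singleton_pow, smul_eq_mul, Ideal.mul_top,
      Ideal.mem_span_singleton]
    exact key2 m n hmn)
  have hLn : ∀ n : ℕ, (π : R) ^ n ∣ a (n + k) - L := by
    intro n
    have := hL n
    rwa [SModEq.sub_mem, Ideal.span_singleton_pow, smul_eq_mul, Ideal.mul_top,
      Ideal.mem_span_singleton] at this
  -- conclude: ρ γ v - L • v = 0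
  have hfin : ρ γ v - L • v = 0 := by
    apply haus_free_aux π
    intro m
    obtain ⟨s, hs⟩ := hLn m
    refine ⟨s • v + π ^ (k + 1) • y (m + k), ?_⟩
    have h1 := hay (m + k)
    calc ρ γ v - L • v = (a (m + k) - L) • v + π ^ (m + k + 1) • y (m + k) := by
          rw [sub_smul]
          linear_combination (norm := abel) h1
      _ = π ^ m • (s • v + π ^ (k + 1) • y (m + k)) := by
          rw [hs]
          rw [smul_add, ← smul_assoc, ← smul_assoc, smul_eq_mul, smul_eq_mul, ← pow_add]
          ring_nf
  have : ρ γ v = L • v := by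
    have := sub_eq_zero.mp hfin
    exact this
  rw [this]
  exact Submodule.mem_span_singleton.mpr ⟨L, rfl⟩
end

section
/- Let R be a complete DVR and G a flat affine group scheme over R. Then the divisible ideal d(R[G]) = ⋂_n π^n R[G] is a Hopf ideal; i.e., the closed subscheme Haus(G) of G defined by d(R[G]) is a closed flat subgroup scheme of G. -/
open TensorProduct

universe u v

section Basics
variable {R : Type u} [CommRing R] [IsDomain R] [IsDiscreteValuationRing R]
variable {π : R} (hπ : Irreducible π)
variable {M : Type v} [AddCommGroup M] [Module R M]

theorem tf_pow (htf : ∀ m : M, π • m = 0 → m = 0) :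
    ∀ (n : ℕ) (m : M), π ^ n • m = 0 → m = 0 := by
  intro n
  induction n with
  | zero => intro m h; simpa using h
  | succ n ih =>
    intro m h
    rw [pow_succ', mul_smul] at h
    exact ih m (htf _ h)

theorem tf_cancel (htf : ∀ m : M, π • m = 0 → m = 0) (n : ℕ) {a b : M}
    (h : π ^ n • a = π ^ n • b) : a = b := by
  have : π ^ n • (a - b) = 0 := by rw [smul_sub, h, sub_self]
  exact sub_eq_zero.mp (tf_pow htf n _ this)

include hπ in
theorem tf_smul_reg (htf : ∀ m : M, π • m = 0 → m = 0) {r : R} (hr : r ≠ 0)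
    {m : M} (h : r • m = 0) : m = 0 := by
  obtain ⟨n, u, rfl⟩ := IsDiscreteValuationRing.eq_unit_mul_pow_irreducible hr hπ
  apply tf_pow htf n
  have : ((↑u⁻¹ : R) * ((u : R) * π ^ n)) • m = 0 := by rw [mul_smul, h, smul_zero]
  rwa [← mul_assoc, Units.inv_mul, one_mul] at this

include hπ in
theorem tf_noZeroSMul (htf : ∀ m : M, π • m = 0 → m = 0) :
    NoZeroSMulDivisors R M := by
  refine ⟨fun {r m} h => ?_⟩
  by_cases hr : r = 0
  · exact Or.inl hr
  · exact Or.inr (tf_smul_reg hπ htf hr h)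

include hπ in
theorem tf_flat (htf : ∀ m : M, π • m = 0 → m = 0) : Module.Flat R M := by
  rw [Module.Flat.iff_rTensor_injective']
  intro J
  obtain ⟨x, hx⟩ := (IsPrincipalIdealRing.principal J).principal
  subst hx
  by_cases hx0 : x = 0
  · subst hx0
    rw [show Submodule.span R {(0 : R)} = (⊥ : Ideal R) by simp]
    haveI hsub : Subsingleton (⊥ : Ideal R) := by
      constructor; rintro ⟨a, ha⟩ ⟨b, hb⟩
      simp only [Ideal.mem_bot] at ha hb
      simp [ha, hb]
    haveI : Subsingleton ((⊥ : Ideal R) ⊗[R] M) := inferInstance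
    intro z w _
    exact Subsingleton.elim z w
  · have key : Function.Injective
        (LinearMap.rTensor M (LinearMap.toSpanSingleton R R x)) := by
      have h1 : (TensorProduct.lid R M).toLinearMap ∘ₗ
          LinearMap.rTensor M (LinearMap.toSpanSingleton R R x)
          = (LinearMap.lsmul R M x) ∘ₗ (TensorProduct.lid R M).toLinearMap := by
        apply TensorProduct.ext'
        intro r m
        simp [mul_smul, smul_comm x r m]
      have h2 : Function.Injective (LinearMap.lsmul R M x) := by
        intro a b hab
        have : x • (a - b) = 0 := by
          simp only [LinearMap.lsmul_apply] at hab
          rw [smul_sub, hab, sub_self]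
        have := tf_smul_reg hπ htf hx0 this
        rwa [sub_eq_zero] at this
      have h3 : Function.Injective ((TensorProduct.lid R M).toLinearMap ∘ₗ
          LinearMap.rTensor M (LinearMap.toSpanSingleton R R x)) := by
        rw [h1]
        exact h2.comp (TensorProduct.lid R M).injective
      exact fun a b hab => h3 (by simp [hab])
    haveI : NoZeroSMulDivisors R R := inferInstance
    set e := LinearEquiv.toSpanNonzeroSingleton R R x hx0 with he
    have hcomp : (Submodule.span R {x}).subtype ∘ₗ (e : R →ₗ[R] (Submodule.span R {x})) =
        LinearMap.toSpanSingleton R R x := by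
      apply LinearMap.ext
      intro r
      rfl
    have h4 : Function.Injective (LinearMap.rTensor M ((Submodule.span R {x}).subtype)
        ∘ LinearMap.rTensor M (e : R →ₗ[R] (Submodule.span R {x}))) := by
      rw [← LinearMap.coe_comp, ← LinearMap.rTensor_comp, hcomp]
      exact key
    have h5 : Function.Surjective (LinearMap.rTensor M (e : R →ₗ[R] (Submodule.span R {x}))) := by
      have : Function.Surjective (e : R →ₗ[R] (Submodule.span R {x})) := e.surjective
      exact LinearMap.rTensor_surjective M this
    exact h4.of_comp_right h5

end Basics

section Sat
variable {R : Type u} [CommRing R] [IsDomain R] [IsDiscreteValuationRing R]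
variable (π : R)
variable {M : Type v} [AddCommGroup M] [Module R M]

/-- Saturation of a submodule w.r.t. powers of `π`. -/
def satSub (N : Submodule R M) : Submodule R M where
  carrier := {m | ∃ n : ℕ, π ^ n • m ∈ N}
  add_mem' := by
    rintro a b ⟨n, hn⟩ ⟨k, hk⟩
    refine ⟨n + k, ?_⟩
    rw [smul_add]
    refine add_mem ?_ ?_
    · have : π ^ (n + k) • a = π ^ k • (π ^ n • a) := by
        rw [add_comm, pow_add, mul_smul]
      rw [this]; exact N.smul_mem _ hn
    · have : π ^ (n + k) • b = π ^ n • (π ^ k • b) := by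
        rw [pow_add, mul_smul]
      rw [this]; exact N.smul_mem _ hk
  zero_mem' := ⟨0, by simp⟩
  smul_mem' := by
    rintro c a ⟨n, hn⟩
    exact ⟨n, by rw [smul_comm]; exact N.smul_mem c hn⟩

variable {π}

theorem mem_satSub {N : Submodule R M} {m : M} :
    m ∈ satSub π N ↔ ∃ n : ℕ, π ^ n • m ∈ N := Iff.rfl

theorem le_satSub (N : Submodule R M) : N ≤ satSub π N :=
  fun m hm => ⟨0, by simpa using hm⟩

theorem satSub_saturated {N : Submodule R M} (k : ℕ) (m : M)
    (h : π ^ k • m ∈ satSub π N) : m ∈ satSub π N := by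
  obtain ⟨n, hn⟩ := h
  refine ⟨n + k, ?_⟩
  rwa [pow_add, mul_smul]

variable (hπ : Irreducible π)

include hπ in
theorem sat_singleton_cyclic
    (htf : ∀ m : M, π • m = 0 → m = 0)
    (hsep : ∀ m : M, (∀ n : ℕ, ∃ y, m = π ^ n • y) → m = 0)
    (e : M) : ∃ m₀ : M, satSub π (Submodule.span R {e}) = Submodule.span R {m₀} := by
  classical
  by_cases he : e = 0
  · refine ⟨0, le_antisymm ?_ ?_⟩
    · rintro m ⟨n, hn⟩
      rw [he, Submodule.span_zero_singleton] at hn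
      have : m = 0 := tf_pow htf n m (by simpa using hn)
      simp [this]
    · rw [Submodule.span_zero_singleton]; exact bot_le
  · set P : ℕ → Prop := fun k => ∃ m : M, e = π ^ k • m with hP
    have hPbd : ∃ K, ¬ P K := by
      by_contra h
      push_neg at h
      exact he (hsep e fun n => h n)
    have hK : ¬ P (Nat.find hPbd) := Nat.find_spec hPbd
    have hKpos : Nat.find hPbd ≠ 0 := by
      intro h0
      exact (h0 ▸ hK) ⟨e, by simp⟩
    set j := Nat.find hPbd - 1 with hj_def
    have hj : P j := not_not.mp (Nat.find_min hPbd (by omega))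
    have hj1 : ¬ P (j + 1) := by
      have : j + 1 = Nat.find hPbd := by omega
      rw [this]; exact hK
    obtain ⟨m₀, hm₀⟩ := hj
    refine ⟨m₀, le_antisymm ?_ ?_⟩
    · rintro m ⟨n, hn⟩
      rw [Submodule.mem_span_singleton] at hn
      obtain ⟨c, hc⟩ := hn
      rw [Submodule.mem_span_singleton]
      by_cases hc0 : c = 0
      · have : m = 0 := tf_pow htf n m (by rw [← hc, hc0, zero_smul])
        exact ⟨0, by simp [this]⟩
      · obtain ⟨v, u, rfl⟩ := IsDiscreteValuationRing.eq_unit_mul_pow_irreducible hc0 hπ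
        have hc' : π ^ (v + j) • ((u : R) • m₀) = π ^ n • m := by
          rw [← hc, hm₀, smul_smul, smul_smul]
          congr 1
          ring
        by_cases hle : n ≤ v + j
        · refine ⟨(u : R) * π ^ (v + j - n), tf_cancel htf n ?_⟩
          have : π ^ n • (((u : R) * π ^ (v + j - n)) • m₀) = π ^ (v + j) • ((u : R) • m₀) := by
            rw [← mul_smul, ← mul_smul]
            congr 1
            have hnv : n + (v + j - n) = v + j := by omega
            rw [← hnv, pow_add]
            simp only [Nat.add_sub_cancel_left]
            ring
          rw [this, hc']
        · exfalso
          apply hj1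
          -- from hc' : π^(v+j) • (u • m₀) = π^n • m with n > v + j
          have hsplit : π ^ (v + j) • ((u : R) • m₀) =
              π ^ (v + j) • (π ^ (n - (v + j)) • m) := by
            rw [hc', ← mul_smul, ← pow_add]
            congr 2
            omega
          have hcancel : (u : R) • m₀ = π ^ (n - (v + j)) • m :=
            tf_cancel htf (v + j) hsplit
          -- e = π^j • m₀ = π^j • (u⁻¹ • (π^(n-(v+j)) • m)) = π^(j+1) • (...)
          refine ⟨π ^ (n - (v + j) - 1) • ((u⁻¹ : Rˣ) • m), ?_⟩
          have hm₀' : m₀ = (u⁻¹ : Rˣ) • π ^ (n - (v + j)) • m := by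
            rw [← hcancel, ← Units.smul_def, inv_smul_smul]
          rw [hm₀, hm₀', smul_comm ((u⁻¹ : Rˣ)) (π ^ (n - (v + j)))]
          rw [smul_smul, smul_smul, ← pow_add, ← pow_add]
          congr 2
          omega
    · rw [Submodule.span_le, Set.singleton_subset_iff]
      exact ⟨j, by rw [← hm₀]; exact Submodule.mem_span_singleton_self e⟩

end Sat

section Quot
variable {R : Type u} [CommRing R] [IsDomain R] [IsDiscreteValuationRing R]
variable {π : R} (hπ : Irreducible π)
variable {M : Type v} [AddCommGroup M] [Module R M]

theorem quot_tf {M₁ : Submodule R M}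
    (hsat : ∀ (k : ℕ) (m : M), π ^ k • m ∈ M₁ → m ∈ M₁) :
    ∀ q : M ⧸ M₁, π • q = 0 → q = 0 := by
  intro q hq
  obtain ⟨m, rfl⟩ := Submodule.Quotient.mk_surjective _ q
  rw [← Submodule.Quotient.mk_smul, Submodule.Quotient.mk_eq_zero] at hq
  rw [Submodule.Quotient.mk_eq_zero]
  exact hsat 1 m (by simpa using hq)

include hπ in
theorem quot_sep [IsAdicComplete (Ideal.span {π}) R]
    (htf : ∀ m : M, π • m = 0 → m = 0)
    (hsep : ∀ m : M, (∀ n : ℕ, ∃ y, m = π ^ n • y) → m = 0)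
    {M₁ : Submodule R M} {m₀ : M}
    (hsat : ∀ (k : ℕ) (m : M), π ^ k • m ∈ M₁ → m ∈ M₁)
    (hcyc : M₁ = Submodule.span R {m₀}) :
    ∀ q : M ⧸ M₁, (∀ n : ℕ, ∃ y, q = π ^ n • y) → q = 0 := by
  have hpowI : ∀ n : ℕ, (Ideal.span {π} ^ n • ⊤ : Submodule R R) = Ideal.span {π ^ n} := by
    intro n
    rw [smul_eq_mul, Ideal.mul_top, Ideal.span_singleton_pow]
  intro q hq
  obtain ⟨m, rfl⟩ := Submodule.Quotient.mk_surjective _ q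
  have hwit : ∀ n : ℕ, ∃ a : M, ∃ d : R, m = π ^ n • a + d • m₀ := by
    intro n
    obtain ⟨y, hy⟩ := hq n
    obtain ⟨b, rfl⟩ := Submodule.Quotient.mk_surjective _ y
    rw [← Submodule.Quotient.mk_smul, Submodule.Quotient.eq] at hy
    rw [hcyc, Submodule.mem_span_singleton] at hy
    obtain ⟨d, hd⟩ := hy
    exact ⟨b, d, by rw [hd]; abel⟩
  choose a c hac using hwit
  by_cases hm0 : m₀ = 0
  · have : m = 0 := by
      apply hsep
      intro n
      refine ⟨a n, ?_⟩
      rw [hac n, hm0, smul_zero, add_zero]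
    rw [this, Submodule.Quotient.mk_eq_zero]
    exact M₁.zero_mem
  · have hpure : ∀ (k : ℕ) (r : R) (z : M), r • m₀ = π ^ k • z →
        ∃ r' : R, r = π ^ k * r' := by
      intro k r z hz
      have hzM₁ : z ∈ M₁ := by
        apply hsat k
        rw [← hz, hcyc]
        exact Submodule.smul_mem _ r (Submodule.mem_span_singleton_self m₀)
      rw [hcyc, Submodule.mem_span_singleton] at hzM₁
      obtain ⟨r', hr'⟩ := hzM₁
      refine ⟨r', ?_⟩
      have h0 : (r - π ^ k * r') • m₀ = 0 := by
        rw [sub_smul, mul_smul, hz, ← hr', smul_comm, sub_self]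
      have := tf_noZeroSMul hπ htf (M := M)
      rcases smul_eq_zero.mp h0 with h | h
      · exact sub_eq_zero.mp h
      · exact absurd h hm0
    have hcau : ∀ {i jj : ℕ}, i ≤ jj →
        c i ≡ c jj [SMOD (Ideal.span {π} ^ i • ⊤ : Submodule R R)] := by
      intro i jj hij
      rw [SModEq.sub_mem, hpowI, Ideal.mem_span_singleton]
      have key : (c i - c jj) • m₀ = π ^ i • (π ^ (jj - i) • a jj - a i) := by
        have h1 := hac i
        have h2 := hac jj
        have : π ^ i • a i + c i • m₀ = π ^ jj • a jj + c jj • m₀ := by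
          rw [← h1, ← h2]
        have h3 : (c i - c jj) • m₀ = π ^ jj • a jj - π ^ i • a i := by
          rw [sub_smul]
          have := congrArg (fun z => z - c jj • m₀ - π ^ i • a i) this
          abel_nf at this ⊢
          linear_combination (norm := abel_nf) this
        rw [h3, smul_sub, ← mul_smul, ← pow_add, Nat.add_sub_cancel' hij]
      obtain ⟨r', hr'⟩ := hpure i _ _ key
      exact ⟨r', hr'⟩
    obtain ⟨L, hL⟩ := IsPrecomplete.prec (IsAdicComplete.toIsPrecomplete) hcau
    have hfinal : m - L • m₀ = 0 := by
      apply hsep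
      intro n
      have hcn := hL n
      rw [SModEq.sub_mem, hpowI, Ideal.mem_span_singleton] at hcn
      obtain ⟨d, hd⟩ := hcn
      refine ⟨a n + d • m₀, ?_⟩
      calc m - L • m₀ = π ^ n • a n + c n • m₀ - L • m₀ := by rw [← hac n]
        _ = π ^ n • a n + (c n - L) • m₀ := by rw [sub_smul]; abel
        _ = π ^ n • a n + (π ^ n * d) • m₀ := by rw [← hd]
        _ = π ^ n • (a n + d • m₀) := by rw [smul_add, mul_smul]
    rw [sub_eq_zero] at hfinal
    rw [Submodule.Quotient.mk_eq_zero, hfinal, hcyc]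
    exact Submodule.smul_mem _ _ (Submodule.mem_span_singleton_self m₀)

end Quot

section FRT
variable {R : Type u} [CommRing R] [IsDomain R] [IsDiscreteValuationRing R]
variable {π : R} (hπ : Irreducible π)

theorem finite_of_span_empty {M : Type v} [AddCommGroup M] [Module R M]
    (htf : ∀ m : M, π • m = 0 → m = 0)
    (hgen : ∀ m : M, ∃ n : ℕ, π ^ n • m ∈ (⊥ : Submodule R M)) :
    Module.Finite R M := by
  have : ∀ m : M, m = 0 := by
    intro m
    obtain ⟨n, hn⟩ := hgen m
    exact tf_pow htf n m (by simpa using hn)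
  constructor
  rw [show (⊤ : Submodule R M) = ⊥ from le_antisymm (fun m _ => by simp [this m]) bot_le]
  exact Submodule.fg_bot

include hπ in
theorem frt [IsAdicComplete (Ideal.span {π}) R] :
    ∀ (k : ℕ) (M : Type v) (_ : AddCommGroup M) (_ : Module R M),
      (∀ m : M, π • m = 0 → m = 0) →
      (∀ m : M, (∀ n : ℕ, ∃ y, m = π ^ n • y) → m = 0) →
      ∀ (t : Finset M), t.card ≤ k →
        (∀ m : M, ∃ n : ℕ, π ^ n • m ∈ Submodule.span R (t : Set M)) →
        Module.Finite R M := by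
  intro k
  induction k with
  | zero =>
    intro M _ _ htf hsep t hcard hgen
    have ht : t = ∅ := Finset.card_eq_zero.mp (Nat.le_zero.mp hcard)
    subst ht
    apply finite_of_span_empty htf
    simpa [Submodule.span_empty] using hgen
  | succ k ih =>
    intro M _ _ htf hsep t hcard hgen
    classical
    rcases t.eq_empty_or_nonempty with rfl | ⟨e, he⟩
    · apply finite_of_span_empty htf
      simpa [Submodule.span_empty] using hgen
    · set M₁ := satSub π (Submodule.span R {e}) with hM₁
      obtain ⟨m₀, hm₀⟩ := sat_singleton_cyclic hπ htf hsep e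
      have hsatk : ∀ (j : ℕ) (m : M), π ^ j • m ∈ M₁ → m ∈ M₁ :=
        fun j m h => satSub_saturated j m h
      have htfQ : ∀ q : M ⧸ M₁, π • q = 0 → q = 0 := quot_tf hsatk
      have hsepQ : ∀ q : M ⧸ M₁, (∀ n : ℕ, ∃ y, q = π ^ n • y) → q = 0 :=
        quot_sep hπ htf hsep hsatk hm₀
      set t' : Finset (M ⧸ M₁) := Finset.image (M₁.mkQ) (t.erase e) with ht'
      have hcard' : t'.card ≤ k := by
        calc t'.card ≤ (t.erase e).card := Finset.card_image_le
          _ = t.card - 1 := Finset.card_erase_of_mem he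
          _ ≤ k := by omega
      have hgenQ : ∀ q : M ⧸ M₁, ∃ n : ℕ, π ^ n • q ∈ Submodule.span R (t' : Set (M ⧸ M₁)) := by
        intro q
        obtain ⟨m, rfl⟩ := Submodule.Quotient.mk_surjective _ q
        obtain ⟨n, hn⟩ := hgen m
        refine ⟨n, ?_⟩
        have step1 : M₁.mkQ (π ^ n • m) ∈ Submodule.map M₁.mkQ (Submodule.span R (t : Set M)) :=
          Submodule.mem_map_of_mem hn
        rw [Submodule.map_span] at step1
        have htcoe : (t : Set M) = insert e ((t.erase e : Finset M) : Set M) := by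
          rw [← Finset.coe_insert, Finset.insert_erase he]
        rw [htcoe, Set.image_insert_eq, Submodule.span_insert] at step1
        have hmkQe : M₁.mkQ e = 0 := by
          rw [Submodule.mkQ_apply, Submodule.Quotient.mk_eq_zero]
          exact le_satSub _ (Submodule.mem_span_singleton_self e)
        rw [hmkQe, Submodule.span_zero_singleton, bot_sup_eq] at step1
        have : (⇑M₁.mkQ '' ((t.erase e : Finset M) : Set M)) = (t' : Set (M ⧸ M₁)) := by
          rw [ht', Finset.coe_image]
        rw [this] at step1
        rw [← Submodule.Quotient.mk_smul]
        exact step1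
      have hQfin : Module.Finite R (M ⧸ M₁) := ih (M ⧸ M₁) _ _ htfQ hsepQ t' hcard' hgenQ
      have h1 : (Submodule.map M₁.mkQ (⊤ : Submodule R M)).FG := by
        rw [Submodule.map_top, Submodule.range_mkQ]
        exact Module.finite_def.mp hQfin
      have h2 : ((⊤ : Submodule R M) ⊓ LinearMap.ker M₁.mkQ).FG := by
        rw [top_inf_eq, Submodule.ker_mkQ, hM₁, hm₀]
        exact ⟨{m₀}, by simp⟩
      exact ⟨Submodule.fg_of_fg_map_of_fg_inf_ker M₁.mkQ h1 h2⟩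

end FRT

section Tensor
variable {R : Type u} [CommRing R] [IsDomain R] [IsDiscreteValuationRing R]
variable {π : R} (hπ : Irreducible π)

include hπ in
theorem tensor_sep [IsAdicComplete (Ideal.span {π}) R]
    {B : Type v} [AddCommGroup B] [Module R B]
    {C : Type v} [AddCommGroup C] [Module R C]
    (htfB : ∀ m : B, π • m = 0 → m = 0)
    (hsepB : ∀ m : B, (∀ n : ℕ, ∃ y, m = π ^ n • y) → m = 0)
    (htfC : ∀ m : C, π • m = 0 → m = 0)
    (hsepC : ∀ m : C, (∀ n : ℕ, ∃ y, m = π ^ n • y) → m = 0) :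
    ∀ x : B ⊗[R] C, (∀ n : ℕ, ∃ y, x = π ^ n • y) → x = 0 := by
  classical
  intro x hx
  obtain ⟨S, hS⟩ := TensorProduct.exists_finset x
  set t : Finset C := S.image Prod.snd with ht
  set C₀ : Submodule R C := satSub π (Submodule.span R (t : Set C)) with hC₀
  have htle : ∀ cc ∈ t, cc ∈ C₀ :=
    fun cc hcc => le_satSub _ (Submodule.subset_span hcc)
  -- C₀ is torsion-free and separated
  have htfC₀ : ∀ m : C₀, π • m = 0 → m = 0 := by
    rintro ⟨m, hm⟩ h
    apply Subtype.ext
    have : π • m = 0 := congrArg Subtype.val h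
    exact htfC m this
  have hsepC₀ : ∀ m : C₀, (∀ n : ℕ, ∃ y, m = π ^ n • y) → m = 0 := by
    rintro ⟨m, hm⟩ h
    apply Subtype.ext
    apply hsepC m
    intro n
    obtain ⟨y, hy⟩ := h n
    exact ⟨y, congrArg Subtype.val hy⟩
  -- generators of C₀
  set t₀ : Finset C₀ := t.attach.image
      (fun c => (⟨c.1, htle c.1 c.2⟩ : C₀)) with ht₀
  have hsub_t₀ : Submodule.map C₀.subtype (Submodule.span R (t₀ : Set C₀)) =
      Submodule.span R (t : Set C) := by
    rw [Submodule.map_span]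
    congr 1
    ext cc
    constructor
    · rintro ⟨z, hz, rfl⟩
      simp only [ht₀, Finset.coe_image, Set.mem_image] at hz
      obtain ⟨⟨c, hc⟩, -, rfl⟩ := hz
      exact hc
    · intro hcc
      refine ⟨⟨cc, htle cc hcc⟩, ?_, rfl⟩
      simp only [ht₀, Finset.coe_image, Set.mem_image]
      exact ⟨⟨cc, hcc⟩, by simp, rfl⟩
  have hgen₀ : ∀ m : C₀, ∃ n : ℕ, π ^ n • m ∈ Submodule.span R (t₀ : Set C₀) := by
    rintro ⟨c, hc⟩
    obtain ⟨n, hn⟩ := hc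
    refine ⟨n, ?_⟩
    have : (π ^ n • c) ∈ Submodule.map C₀.subtype (Submodule.span R (t₀ : Set C₀)) := by
      rw [hsub_t₀]; exact hn
    obtain ⟨z, hz, hzc⟩ := this
    have : z = π ^ n • (⟨c, ⟨n, hn⟩⟩ : C₀) := by
      apply Subtype.ext
      simpa using hzc
    rwa [← this]
  haveI hfin : Module.Finite R C₀ :=
    frt hπ t₀.card C₀ _ _ htfC₀ hsepC₀ t₀ le_rfl hgen₀
  haveI : NoZeroSMulDivisors R C₀ := tf_noZeroSMul hπ htfC₀
  haveI : Module.Free R C₀ := Module.free_of_finite_type_torsion_free'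
  set ι := Module.Free.ChooseBasisIndex R C₀ with hι
  set b : Module.Basis ι R C₀ := Module.Free.chooseBasis R C₀ with hb
  haveI hflatB : Module.Flat R B := tf_flat hπ htfB
  -- x lies in the image of B ⊗ C₀
  have hinj : Function.Injective (LinearMap.lTensor B C₀.subtype) :=
    Module.Flat.lTensor_preserves_injective_linearMap _ C₀.injective_subtype
  have hxmem : x ∈ LinearMap.range (LinearMap.lTensor B C₀.subtype) := by
    rw [hS]
    apply Submodule.sum_mem
    rintro ⟨bb, cc⟩ hbc
    have hcc : cc ∈ C₀ := htle cc (by rw [ht]; exact Finset.mem_image_of_mem Prod.snd hbc)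
    exact ⟨bb ⊗ₜ (⟨cc, hcc⟩ : C₀), by simp⟩
  obtain ⟨x₀, hx₀⟩ := hxmem
  -- torsion-freeness of B ⊗ (C ⧸ C₀)
  have htfQ : ∀ q : C ⧸ C₀, π • q = 0 → q = 0 :=
    quot_tf (fun k m h => satSub_saturated k m h)
  have htfT : ∀ z : B ⊗[R] (C ⧸ C₀), π • z = 0 → z = 0 := by
    have hinj2 : Function.Injective
        (LinearMap.lTensor B (π • (LinearMap.id : (C ⧸ C₀) →ₗ[R] (C ⧸ C₀)))) := by
      apply Module.Flat.lTensor_preserves_injective_linearMap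
      intro a b hab
      simp only [LinearMap.smul_apply, LinearMap.id_apply] at hab
      have : π • (a - b) = 0 := by rw [smul_sub, hab, sub_self]
      exact sub_eq_zero.mp (htfQ _ this)
    intro z hz
    have h1 : (LinearMap.lTensor B (π • (LinearMap.id : (C ⧸ C₀) →ₗ[R] (C ⧸ C₀)))) z
        = π • z := by
      rw [LinearMap.lTensor_smul]
      simp
    have h2 : (LinearMap.lTensor B (π • (LinearMap.id : (C ⧸ C₀) →ₗ[R] (C ⧸ C₀)))) z
        = (LinearMap.lTensor B (π • (LinearMap.id : (C ⧸ C₀) →ₗ[R] (C ⧸ C₀)))) 0 := by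
      rw [h1, hz, map_zero]
    exact hinj2 h2
  -- divisibility descends to x₀
  have hex : Function.Exact (LinearMap.lTensor B C₀.subtype) (LinearMap.lTensor B C₀.mkQ) :=
    Module.Flat.lTensor_exact B (LinearMap.exact_subtype_mkQ C₀)
  have hdiv : ∀ n : ℕ, ∃ y₀ : B ⊗[R] C₀, x₀ = π ^ n • y₀ := by
    intro n
    obtain ⟨y, hy⟩ := hx n
    have hzero : LinearMap.lTensor B C₀.mkQ y = 0 := by
      have hcomp : C₀.mkQ ∘ₗ C₀.subtype = 0 := by
        ext z; simp
      have h1 : π ^ n • (LinearMap.lTensor B C₀.mkQ y) = 0 := by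
        rw [← map_smul, ← hy, ← hx₀, ← LinearMap.lTensor_comp_apply, hcomp]
        simp
      exact tf_pow htfT n _ h1
    obtain ⟨y₀, hy₀⟩ := (hex y).mp hzero
    refine ⟨y₀, hinj ?_⟩
    rw [map_smul, hy₀, ← hy]
    exact hx₀
  -- coordinates
  set Φ : (B ⊗[R] C₀) ≃ₗ[R] (ι →₀ B) :=
    (TensorProduct.congr (LinearEquiv.refl R B) b.repr).trans
      (TensorProduct.finsuppScalarRight R R B ι) with hΦ
  have hx₀0 : Φ x₀ = 0 := by
    apply Finsupp.ext
    intro i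
    rw [Finsupp.coe_zero, Pi.zero_apply]
    apply hsepB
    intro n
    obtain ⟨y₀, hy⟩ := hdiv n
    refine ⟨(Φ y₀) i, ?_⟩
    rw [hy, map_smul, Finsupp.smul_apply]
  have hx₀z : x₀ = 0 := by
    apply Φ.injective
    rw [hx₀0, map_zero]
  rw [← hx₀, hx₀z, map_zero]

end Tensor

section Main
variable {R : Type} [CommRing R] [IsDomain R] [IsDiscreteValuationRing R]
variable {π : R} (hπ : Irreducible π)

include hπ in
theorem flat_tf {M : Type} [AddCommGroup M] [Module R M] [Module.Flat R M] :
    ∀ m : M, π • m = 0 → m = 0 := by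
  intro m h
  set f : R →ₗ[R] R := LinearMap.toSpanSingleton R R π with hf
  have hinjf : Function.Injective f := by
    intro a b hab
    simp only [hf, LinearMap.toSpanSingleton_apply, smul_eq_mul] at hab
    exact mul_left_injective₀ hπ.ne_zero hab
  have hinj : Function.Injective (LinearMap.rTensor M f) :=
    Module.Flat.rTensor_preserves_injective_linearMap f hinjf
  have e2 : LinearMap.rTensor M f ((1 : R) ⊗ₜ[R] m) = π ⊗ₜ[R] m := by
    simp [hf]
  have e3 : (π ⊗ₜ[R] m : R ⊗[R] M) = 0 := by
    have h1 : (TensorProduct.lid R M) (π ⊗ₜ[R] m) = 0 := by simpa using h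
    exact (TensorProduct.lid R M).map_eq_zero_iff.mp h1
  have h0 : ((1 : R) ⊗ₜ[R] m : R ⊗[R] M) = 0 := by
    apply hinj
    rw [e2, e3, map_zero]
  have := congrArg (TensorProduct.lid R M) h0
  simpa using this

end Main

/-- Over a complete DVR `R` with uniformizer `π`, the divisible ideal
`d(R[G]) = ⋂ₙ πⁿ R[G]` of the flat Hopf algebra `A = R[G]` of a flat affine group
scheme `G` is a Hopf ideal cutting out a flat closed subgroup scheme `Haus(G)`:
the counit vanishes on it, comultiplication maps it into `I ⊗ A + A ⊗ I`, the
antipode preserves it, and `A/I` is `R`-flat. -/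
theorem stmt12 {R : Type} [CommRing R] [IsDomain R] [IsDiscreteValuationRing R]
    (π : R) (hπ : Irreducible π) [IsAdicComplete (Ideal.span {π}) R]
    {A : Type} [CommRing A] [HopfAlgebra R A] [Module.Flat R A]
    (I : Ideal A) (hI : I = ⨅ n : ℕ, Ideal.span {(algebraMap R A π) ^ n}) :
    (∀ a ∈ I, Coalgebra.counit (R := R) (A := A) a = (0 : R)) ∧
    (∀ a ∈ I, Coalgebra.comul (R := R) (A := A) a ∈
        LinearMap.range
          (TensorProduct.map (I.restrictScalars R).subtype (LinearMap.id : A →ₗ[R] A)) ⊔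
        LinearMap.range
          (TensorProduct.map (LinearMap.id : A →ₗ[R] A) (I.restrictScalars R).subtype)) ∧
    (∀ a ∈ I, HopfAlgebra.antipode (R := R) (A := A) a ∈ I) ∧
    Module.Flat R (A ⧸ I) := by
  have hdvd : ∀ a : A, a ∈ I ↔ ∀ n : ℕ, ∃ b : A, a = π ^ n • b := by
    intro a
    rw [hI, Submodule.mem_iInf]
    apply forall_congr'
    intro n
    rw [Ideal.mem_span_singleton]
    constructor
    · rintro ⟨b, hb⟩
      exact ⟨b, by rw [hb, Algebra.smul_def, map_pow]⟩
    · rintro ⟨b, hb⟩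
      exact ⟨b, by rw [hb, Algebra.smul_def, map_pow]⟩
  have htfA : ∀ a : A, π • a = 0 → a = 0 := flat_tf hπ
  set I' : Submodule R A := I.restrictScalars R with hI'
  have hmemI' : ∀ a : A, a ∈ I' ↔ a ∈ I := fun a => Iff.rfl
  have hpowI : ∀ n : ℕ, (Ideal.span {π} ^ n • ⊤ : Submodule R R) = Ideal.span {π ^ n} := by
    intro n
    rw [smul_eq_mul, Ideal.mul_top, Ideal.span_singleton_pow]
  -- torsion-freeness of the quotient
  have htfQ : ∀ q : A ⧸ I', π • q = 0 → q = 0 := by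
    intro q hq
    obtain ⟨a, rfl⟩ := Submodule.Quotient.mk_surjective _ q
    rw [← Submodule.Quotient.mk_smul, Submodule.Quotient.mk_eq_zero] at hq
    rw [Submodule.Quotient.mk_eq_zero]
    rw [hmemI'] at hq ⊢
    rw [hdvd] at hq ⊢
    intro n
    obtain ⟨b, hb⟩ := hq (n + 1)
    refine ⟨b, ?_⟩
    have hz : π • (a - π ^ n • b) = 0 := by
      rw [smul_sub, hb, pow_succ', mul_smul]
      exact sub_self _
    exact sub_eq_zero.mp (htfA _ hz)
  -- separatedness of the quotient
  have hsepQ : ∀ q : A ⧸ I', (∀ n : ℕ, ∃ y, q = π ^ n • y) → q = 0 := by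
    intro q hq
    obtain ⟨a, rfl⟩ := Submodule.Quotient.mk_surjective _ q
    rw [Submodule.Quotient.mk_eq_zero, hmemI', hdvd]
    intro n
    obtain ⟨y, hy⟩ := hq n
    obtain ⟨b, rfl⟩ := Submodule.Quotient.mk_surjective _ y
    rw [← Submodule.Quotient.mk_smul, Submodule.Quotient.eq] at hy
    have : a - π ^ n • b ∈ I := hy
    obtain ⟨c, hc⟩ := (hdvd _).mp this n
    refine ⟨b + c, ?_⟩
    have : a = π ^ n • b + π ^ n • c := by
      rw [← hc]; abel
    rw [this, smul_add]
  refine ⟨?_, ?_, ?_, ?_⟩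
  · -- counit vanishes
    intro a ha
    apply IsHausdorff.haus (IsAdicComplete.toIsHausdorff (I := Ideal.span {π}) (M := R))
    intro n
    rw [SModEq.zero, hpowI, Ideal.mem_span_singleton]
    obtain ⟨b, hb⟩ := (hdvd a).mp ha n
    exact ⟨Coalgebra.counit b, by rw [hb, map_smul, smul_eq_mul]⟩
  · -- comul
    intro a ha
    have hsepQQ := tensor_sep hπ htfQ hsepQ htfQ hsepQ
    have hker : LinearMap.ker (TensorProduct.map I'.mkQ I'.mkQ) =
        LinearMap.range (LinearMap.lTensor A I'.subtype) ⊔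
        LinearMap.range (LinearMap.rTensor A I'.subtype) :=
      TensorProduct.map_ker (LinearMap.exact_subtype_mkQ I') (Submodule.mkQ_surjective I')
        (LinearMap.exact_subtype_mkQ I') (Submodule.mkQ_surjective I')
    have hmem : Coalgebra.comul (R := R) (A := A) a ∈
        LinearMap.ker (TensorProduct.map I'.mkQ I'.mkQ) := by
      rw [LinearMap.mem_ker]
      apply hsepQQ
      intro n
      obtain ⟨b, hb⟩ := (hdvd a).mp ha n
      refine ⟨TensorProduct.map I'.mkQ I'.mkQ (Coalgebra.comul (R := R) b), ?_⟩
      rw [hb, map_smul, map_smul]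
    rw [hker] at hmem
    have e1 : TensorProduct.map (I.restrictScalars R).subtype (LinearMap.id : A →ₗ[R] A)
        = LinearMap.rTensor A I'.subtype := rfl
    have e2 : TensorProduct.map (LinearMap.id : A →ₗ[R] A) (I.restrictScalars R).subtype
        = LinearMap.lTensor A I'.subtype := rfl
    rw [e1, e2, sup_comm]
    exact hmem
  · -- antipode
    intro a ha
    rw [hdvd]
    intro n
    obtain ⟨b, hb⟩ := (hdvd a).mp ha n
    exact ⟨HopfAlgebra.antipode (R := R) b, by rw [hb, map_smul]⟩
  · -- flatness of the quotient
    have hflatQ : Module.Flat R (A ⧸ I') := tf_flat hπ htfQ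
    exact Module.Flat.of_linearEquiv
      (Submodule.Quotient.restrictScalarsEquiv R I).symm
end

section
/- Kaplansky's criterion: Let R be a complete DVR with uniformizer π and M a flat R-module such that M ⊗_R K has countable dimension over the fraction field K. Then M is a free R-module if and only if ⋂_n π^n M = 0. -/
open TensorProduct Submodule Set

section KapAux
set_option linter.unusedSectionVars false
set_option linter.unnecessarySimpa false
set_option maxHeartbeats 1600000
variable {R : Type} [CommRing R] [IsDomain R] [IsDiscreteValuationRing R] {π : R}

theorem kap_zero_of_dvd (hπ : Irreducible π) (r : R) (h : ∀ n : ℕ, π ^ n ∣ r) : r = 0 := by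
  by_contra hr
  obtain ⟨n, u, hru⟩ := IsDiscreteValuationRing.eq_unit_mul_pow_irreducible hr hπ
  obtain ⟨c, hc⟩ := h (n + 1)
  have hn : (π : R) ^ n ≠ 0 := pow_ne_zero _ hπ.ne_zero
  have hu : (u : R) = π * c := by
    apply mul_left_cancel₀ hn
    rw [mul_comm ((π : R) ^ n) (↑u), hru.symm.trans hc]; ring
  exact hπ.not_isUnit (isUnit_of_dvd_unit ⟨c, hu⟩ u.isUnit)


/-- separatedness predicate -/
def KSep (π : R) {X : Type*} [AddCommGroup X] [Module R X] (N : Submodule R X) : Prop :=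
  ∀ x ∈ N, (∀ k : ℕ, ∃ y ∈ N, x = π ^ k • y) → x = 0

theorem KSep.mono {X : Type*} [AddCommGroup X] [Module R X] {N N' : Submodule R X}
    (h : N' ≤ N) (hs : KSep π N) : KSep π N' :=
  fun x hx hd => hs x (h hx) fun k => (hd k).imp fun _ hy => ⟨h hy.1, hy.2⟩


/-- classification of separated submodules of the fraction field -/
theorem kap_L1 {K : Type} [Field K] [Algebra R K] [IsFractionRing R K]
    (hπ : Irreducible π) (J : Submodule R K) (hsep : KSep π J) :
    J = ⊥ ∨ ∃ g : K, g ≠ 0 ∧ J = Submodule.span R {g} := by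
  have hA : Function.Injective (algebraMap R K) := IsFractionRing.injective R K
  have hπK : algebraMap R K π ≠ 0 := fun h => hπ.ne_zero (hA (by simpa using h))
  by_cases hb : ∃ t : ℕ, ∀ x ∈ J, IsLocalization.IsInteger R ((π : R) ^ t • x)
  · -- bounded case
    rcases eq_or_ne J ⊥ with hJ | hJ
    · exact Or.inl hJ
    right
    obtain ⟨t, ht⟩ := hb
    set sh : K →ₗ[R] K := ((LinearMap.lsmul K K ((algebraMap R K π) ^ t)).restrictScalars R) with hsh
    have hsh_apply : ∀ x : K, sh x = (π : R) ^ t • x := by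
      intro x
      simp [hsh, Algebra.smul_def, map_pow]
    set I : Ideal R := Submodule.comap (Algebra.linearMap R K) (Submodule.map sh J) with hI
    obtain ⟨g₀, hg₀⟩ := (IsPrincipalIdealRing.principal I).principal
    have hg₀I : g₀ ∈ I := hg₀ ▸ Submodule.mem_span_singleton_self g₀
    obtain ⟨x₀, hx₀J, hx₀⟩ := hg₀I
    have hcancel : ∀ y z : K, (π : R) ^ t • y = (π : R) ^ t • z → y = z := by
      intro y z h
      rw [Algebra.smul_def, Algebra.smul_def, map_pow] at h
      have := congrArg (fun w => ((algebraMap R K π) ^ t)⁻¹ * w) h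
      simpa [inv_mul_cancel_left₀ (pow_ne_zero t hπK)] using this
    have hJspan : J = Submodule.span R {x₀} := by
      apply le_antisymm
      · intro x hx
        obtain ⟨r, hr⟩ := ht x hx
        have hrI : r ∈ I := by
          refine Submodule.mem_comap.2 ⟨x, hx, ?_⟩
          rw [hsh_apply]; exact hr.symm ▸ rfl
        rw [hg₀] at hrI
        obtain ⟨c, hc⟩ := Ideal.mem_span_singleton'.1 hrI
        refine Submodule.mem_span_singleton.2 ⟨c, ?_⟩
        apply hcancel
        have hx₀' : (π : R) ^ t • x₀ = algebraMap R K g₀ := by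
          rw [← hsh_apply]; exact hx₀
        rw [smul_comm ((π:R)^t) c x₀, hx₀', ← hr, ← hc, map_mul, Algebra.smul_def]
      · rw [Submodule.span_le, Set.singleton_subset_iff]; exact hx₀J
    refine ⟨x₀, ?_, hJspan⟩
    intro h0
    exact hJ (by rw [hJspan, h0, Submodule.span_zero_singleton])
  · -- unbounded case: J = ⊥
    push_neg at hb
    left
    rw [eq_bot_iff]
    intro x hx
    rw [Submodule.mem_bot]
    refine hsep x hx fun k => ?_
    rcases eq_or_ne x 0 with rfl | hx0
    · exact ⟨0, J.zero_mem, by rw [smul_zero]⟩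
    obtain ⟨⟨a, b⟩, hab⟩ := IsLocalization.surj (nonZeroDivisors R) x
    have hbne : (b : R) ≠ 0 := nonZeroDivisors.coe_ne_zero b
    obtain ⟨m, u, hbu⟩ := IsDiscreteValuationRing.eq_unit_mul_pow_irreducible hbne hπ
    set a' : R := (↑u⁻¹ : R) * a with ha'
    have hxa : (π : R) ^ m • x = algebraMap R K a' := by
      have h1 : x * algebraMap R K ((u : R) * π ^ m) = algebraMap R K a := by
        rw [← hbu]; exact hab
      rw [map_mul] at h1
      have huK : algebraMap R K (↑u : R) ≠ 0 := fun h => u.ne_zero (hA (by simpa using h))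
      rw [map_pow] at h1
      have hui : algebraMap R K (↑u⁻¹ : R) * algebraMap R K (↑u : R) = 1 := by
        rw [← map_mul, Units.inv_mul, map_one]
      rw [Algebra.smul_def, map_pow, ha', map_mul]
      linear_combination (algebraMap R K (↑u⁻¹ : R)) * h1 - (algebraMap R K π ^ m * x) * hui
    obtain ⟨y, hyJ, hy⟩ := hb (m + k)
    have hyne : y ≠ 0 := by
      intro h; exact hy (h ▸ ⟨0, by simp⟩)
    rcases ValuationRing.isInteger_or_isInteger R ((π : R) ^ (m + k) • y) with h | h
    · exact absurd h hy
    obtain ⟨w, hw⟩ := h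
    refine ⟨(a' * w) • y, J.smul_mem _ hyJ, ?_⟩
    have hzinv : algebraMap R K w = (algebraMap R K π ^ (m+k))⁻¹ * y⁻¹ := by
      rw [hw, Algebra.smul_def, map_pow, mul_inv]
    have hxk : algebraMap R K a' = algebraMap R K π ^ m * x := by
      rw [← hxa, Algebra.smul_def, map_pow]
    rw [smul_smul, Algebra.smul_def, map_mul, map_mul, map_pow, hzinv, hxk]
    field_simp
    ring

/-- Quotient by a complete pure submodule is separated. -/
theorem kap_L2 {X : Type} [AddCommGroup X] [Module R X]
    [IsAdicComplete (Ideal.span {π}) R]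
    (N P : Submodule R X) (hPN : P ≤ N)
    (hsep : KSep π N)
    (hpure : ∀ (k : ℕ), ∀ z ∈ N, π ^ k • z ∈ P → z ∈ P)
    {m : ℕ} (b : Module.Basis (Fin m) R P)
    (x : X) (hx : x ∈ N) (h : ∀ k : ℕ, ∃ y ∈ N, x - π ^ k • y ∈ P) : x ∈ P := by
  choose y hy hc using h
  set C : ℕ → ↥P := fun k => ⟨x - π ^ k • y k, hc k⟩ with hC
  have hd : ∀ k, ∃ D : ↥P, C (k + 1) = C k + (π ^ k : R) • D := by
    intro k
    have hdN : y k - π • y (k + 1) ∈ N := sub_mem (hy k) (N.smul_mem _ (hy (k + 1)))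
    have heq : π ^ k • (y k - π • y (k + 1)) = (x - π ^ (k+1) • y (k+1)) - (x - π ^ k • y k) := by
      rw [smul_sub, smul_smul, ← pow_succ]
      abel
    have hdP : π ^ k • (y k - π • y (k + 1)) ∈ P := by
      rw [heq]; exact P.sub_mem (hc (k + 1)) (hc k)
    refine ⟨⟨_, hpure k _ hdN hdP⟩, ?_⟩
    apply Subtype.ext
    show (x - π ^ (k+1) • y (k+1)) = (x - π ^ k • y k) + π ^ k • (y k - π • y (k + 1))
    rw [heq]; abel
  choose D hD using hd
  set I : Ideal R := Ideal.span {π} with hIdef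
  have hsmultop : ∀ n : ℕ, (I ^ n • ⊤ : Submodule R R) = Ideal.span {π ^ n} := by
    intro n
    rw [smul_eq_mul, Ideal.mul_top, hIdef, Ideal.span_singleton_pow]
  have hf : ∀ i : Fin m, ∃ L : R, ∀ n, (b.repr (C n) i) ≡ L [SMOD (I ^ n • ⊤ : Submodule R R)] := by
    intro i
    apply IsPrecomplete.prec (IsAdicComplete.toIsPrecomplete)
    intro mm nn hmn
    rw [SModEq.sub_mem, hsmultop, Ideal.mem_span_singleton]
    clear hC
    induction nn, hmn using Nat.le_induction with
    | base => simp
    | succ nn hmn ih =>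
        have : C (nn+1) = C nn + (π ^ nn : R) • D nn := hD nn
        rw [this, map_add, map_smul, Finsupp.add_apply, Finsupp.smul_apply]
        have h1 : π ^ mm ∣ π ^ nn := pow_dvd_pow π hmn
        have : b.repr (C mm) i - (b.repr (C nn) i + π ^ nn • b.repr (D nn) i)
            = (b.repr (C mm) i - b.repr (C nn) i) - π ^ nn * b.repr (D nn) i := by
          rw [smul_eq_mul]; ring
        rw [this]
        exact dvd_sub ih (h1.mul_right _)
  choose L hL using hf
  set c : ↥P := ∑ i, L i • b i with hc'
  have hkey : ∀ k, ∃ w : ↥P, (c : X) - (C k : X) = π ^ k • (w : X) := by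
    intro k
    have hcoef : ∀ i, ∃ e : R, L i - b.repr (C k) i = π ^ k * e := by
      intro i
      have := (hL i k).symm
      rw [SModEq.sub_mem, hsmultop, Ideal.mem_span_singleton] at this
      obtain ⟨e, he⟩ := this
      exact ⟨e, he⟩
    choose e he using hcoef
    refine ⟨∑ i, e i • b i, ?_⟩
    have hCk : (C k : ↥P) = ∑ i, b.repr (C k) i • b i := (b.sum_repr (C k)).symm
    have : c - C k = π ^ k • (∑ i, e i • b i : ↥P) := by
      rw [hc', hCk, ← Finset.sum_sub_distrib, Finset.smul_sum]
      refine Finset.sum_congr rfl fun i _ => ?_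
      rw [← sub_smul, he i, mul_smul]
    calc (c : X) - (C k : X) = ((c - C k : ↥P) : X) := by push_cast; ring
      _ = ((π ^ k • (∑ i, e i • b i : ↥P) : ↥P) : X) := by rw [this]
      _ = π ^ k • ((∑ i, e i • b i : ↥P) : X) := by push_cast; ring
  have hdiv : ∀ k, ∃ z ∈ N, x - (c : X) = π ^ k • z := by
    intro k
    obtain ⟨w, hw⟩ := hkey k
    refine ⟨y k - (w : X), sub_mem (hy k) (hPN w.2), ?_⟩
    have hck : (C k : X) = x - π ^ k • y k := rfl
    rw [smul_sub, ← hw, hck]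
    abel
  have := hsep (x - (c : X)) (sub_mem hx (hPN c.2)) hdiv
  have hxc : x = (c : X) := by rwa [sub_eq_zero] at this
  rw [hxc]; exact c.2

theorem kap_list_set {V : Type*} (l : List V) : {x | x ∈ l} = Set.range (fun i : Fin l.length => l.get i) := by
  ext x; simp [List.mem_iff_get]


/-- The inductive step. -/
theorem kap_step {K V : Type} [Field K] [Algebra R K] [IsFractionRing R K]
    [AddCommGroup V] [Module K V] [Module R V] [IsScalarTower R K V]
    [IsAdicComplete (Ideal.span {π}) R]
    (hπ : Irreducible π)
    (M' : Submodule R V) (hsepM : KSep π M') (s : ℕ → V)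
    (n : ℕ) (l : List V)
    (hli : LinearIndependent R (fun i : Fin l.length => l.get i))
    (hspan : Submodule.span R {x | x ∈ l}
      = M' ⊓ (Submodule.span K (s '' Set.Iio n)).restrictScalars R) :
    ∃ l' : List V, l <+: l' ∧
      LinearIndependent R (fun i : Fin l'.length => l'.get i) ∧
      Submodule.span R {x | x ∈ l'}
        = M' ⊓ (Submodule.span K (s '' Set.Iio (n + 1))).restrictScalars R := by
  classical
  have hπK : algebraMap R K π ≠ 0 :=
    fun h => hπ.ne_zero (IsFractionRing.injective R K (by simpa using h))
  set Vsn : Submodule K V := Submodule.span K (s '' Set.Iio n) with hVsn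
  set Mn : Submodule R V := M' ⊓ Vsn.restrictScalars R with hMn
  set Mn1 : Submodule R V := M' ⊓ (Submodule.span K (s '' Set.Iio (n+1))).restrictScalars R with hMn1
  set v : V := s n with hv
  have hIio : s '' Set.Iio (n+1) = insert v (s '' Set.Iio n) := by
    rw [hv]
    have : Set.Iio (n+1) = insert n (Set.Iio n) := by
      ext j; simp only [Set.mem_Iio, Set.mem_insert_iff]; omega
    rw [this, Set.image_insert_eq]
  have hspan1 : Submodule.span K (s '' Set.Iio (n+1)) = Submodule.span K {v} ⊔ Vsn := by
    rw [hIio, Submodule.span_insert]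
  have hMle : Mn ≤ Mn1 := by
    apply inf_le_inf_left
    intro x hx
    rw [Submodule.restrictScalars_mem] at hx ⊢
    rw [hspan1]; exact Submodule.mem_sup_right hx
  -- purity + basis for Mn
  have hsmul_alg : ∀ (k : ℕ) (z : V), (π ^ k : R) • z = ((algebraMap R K π) ^ k) • z := by
    intro k z
    rw [← map_pow, algebraMap_smul]
  have hpure : ∀ (k : ℕ), ∀ z ∈ Mn1, π ^ k • z ∈ Mn → z ∈ Mn := by
    intro k z hz hkz
    refine ⟨hz.1, ?_⟩
    have h2 : (π ^ k : R) • z ∈ Vsn := hkz.2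
    rw [hsmul_alg] at h2
    have := Vsn.smul_mem ((algebraMap R K π ^ k)⁻¹) h2
    rwa [inv_smul_smul₀ (pow_ne_zero _ hπK)] at this
  have hsepMn1 : KSep π Mn1 := KSep.mono inf_le_left hsepM
  have hrange : Set.range (fun i : Fin l.length => l.get i) = {x | x ∈ l} :=
    (kap_list_set l).symm
  have hbMn : Nonempty (Module.Basis (Fin l.length) R Mn) := by
    refine ⟨(Module.Basis.span hli).map (LinearEquiv.ofEq _ _ ?_)⟩
    rw [hrange, hspan, hMn]
  obtain ⟨bMn⟩ := hbMn
  by_cases hvV : v ∈ Vsn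
  · -- degenerate case: nothing new
    refine ⟨l, List.prefix_rfl, hli, ?_⟩
    rw [hspan, hMn1, hspan1, sup_eq_right.2 (by
      rw [Submodule.span_le, Set.singleton_subset_iff]; exact hvV)]
  · -- main case
    set W := V ⧸ Vsn with hW
    set p : V →ₗ[K] W := Vsn.mkQ with hp
    set pR : V →ₗ[R] W := p.restrictScalars R with hpR
    have hkerp : ∀ z : V, pR z = 0 ↔ z ∈ Vsn := by
      intro z
      show p z = 0 ↔ _
      rw [hp, ← LinearMap.mem_ker, Submodule.ker_mkQ]
    set pv : W := pR v with hpv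
    have hpvne : pv ≠ 0 := fun h => hvV ((hkerp v).1 h)
    set ℓ : K ≃ₗ[K] (K ∙ pv) := LinearEquiv.toSpanNonzeroSingleton K W pv hpvne with hℓ
    set ι : K →ₗ[R] W :=
      ((K ∙ pv).subtype.restrictScalars R).comp ((ℓ : K →ₗ[K] (K ∙ pv)).restrictScalars R) with hι
    have hι_apply : ∀ c : K, ι c = c • pv := by
      intro c; simp [hι, hℓ]
    have hι_inj : Function.Injective ι := by
      intro a c h
      rw [hι_apply, hι_apply] at h
      exact smul_left_injective K hpvne h
    set Qn : Submodule R W := Submodule.map pR Mn1 with hQn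
    have hMem_sup : ∀ x ∈ Mn1, ∃ c : K, ι c = pR x ∧ x - c • v ∈ Vsn := by
      intro x hx
      have hx2 : x ∈ Submodule.span K {v} ⊔ Vsn := by
        rw [← hspan1]
        exact hx.2
      obtain ⟨a, ha, bb, hbb, hab⟩ := Submodule.mem_sup.1 hx2
      obtain ⟨c, hc⟩ := Submodule.mem_span_singleton.1 ha
      refine ⟨c, ?_, ?_⟩
      · rw [hι_apply, hpv]
        have : pR x = pR a + pR bb := by rw [← map_add, hab]
        have hbb0 : pR bb = 0 := (hkerp bb).2 hbb
        rw [this, hbb0, add_zero, ← hc]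
        show c • p v = p (c • v)
        exact (map_smul p c v).symm
      · rw [← hab, ← hc]; simpa using hbb
    have hQn_range : ∀ q ∈ Qn, ∃ c : K, ι c = q := by
      intro q hq
      obtain ⟨x, hx, rfl⟩ := hq
      obtain ⟨c, hc, -⟩ := hMem_sup x hx
      exact ⟨c, hc⟩
    set J : Submodule R K := Submodule.comap ι Qn with hJ
    -- separatedness of Qn
    have hsepQn : KSep π Qn := by
      intro ξ hξ hdiv
      obtain ⟨x, hx, rfl⟩ := hξ
      have hxMn : x ∈ Mn := by
        refine kap_L2 (π := π) Mn1 Mn hMle hsepMn1 hpure bMn x hx ?_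
        intro k
        obtain ⟨η, hη, hηe⟩ := hdiv k
        obtain ⟨yk, hyk, rfl⟩ := hη
        refine ⟨yk, hyk, ?_, ?_⟩
        · exact Mn1.sub_mem hx (Mn1.smul_mem _ hyk) |>.1
        · show x - π ^ k • yk ∈ Vsn
          apply (hkerp _).1
          rw [map_sub, map_smul, ← hηe]
          exact sub_self _
      exact (hkerp x).2 hxMn.2
    have hsepJ : KSep π J := by
      intro c hc hdiv
      apply hι_inj
      rw [map_zero]
      refine hsepQn (ι c) hc fun k => ?_
      obtain ⟨d, hd, hde⟩ := hdiv k
      exact ⟨ι d, hd, by rw [hde, map_smul]⟩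
    rcases kap_L1 hπ J hsepJ with hJbot | ⟨g, hg0, hJg⟩
    · -- Mn1 = Mn
      refine ⟨l, List.prefix_rfl, hli, ?_⟩
      rw [hspan]
      apply le_antisymm hMle
      intro x hx
      obtain ⟨c, hc⟩ := hQn_range (pR x) ⟨x, hx, rfl⟩
      have : c ∈ J := Submodule.mem_comap.2 (hc ▸ ⟨x, hx, rfl⟩)
      rw [hJbot, Submodule.mem_bot] at this
      subst this
      refine ⟨hx.1, ?_⟩
      show x ∈ Vsn
      apply (hkerp x).1
      rw [← hc, map_zero]
    · -- new basis vector
      have hgJ : g ∈ J := hJg ▸ Submodule.mem_span_singleton_self g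
      obtain ⟨y, hyMn1, hy⟩ : ∃ y ∈ Mn1, pR y = ι g := by
        obtain ⟨y, hy, he⟩ := Submodule.mem_comap.1 hgJ
        exact ⟨y, hy, he⟩
      have hrsmul : ∀ r : R, r • y ∈ Mn → r = 0 := by
        intro r hr
        have h0 : pR (r • y) = 0 := (hkerp _).2 hr.2
        rw [map_smul, hy, ← map_smul] at h0
        have : (r : R) • g = 0 := by
          rw [← map_zero ι] at h0; exact hι_inj h0
        rw [Algebra.smul_def] at this
        rcases mul_eq_zero.1 this with h | h
        · exact IsFractionRing.injective R K (by simpa using h)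
        · exact absurd h hg0
      have hlMn : ∀ i : Fin l.length, l.get i ∈ Mn := by
        intro i
        rw [← hspan]
        exact Submodule.subset_span (l.get_mem _)
      set u : Fin (l.length + 1) → V := Fin.snoc (fun i : Fin l.length => l.get i) y with hu
      have hlen : (l ++ [y]).length = l.length + 1 := by simp
      have hfun : u ∘ (Fin.cast hlen) = (fun i : Fin (l ++ [y]).length => (l ++ [y]).get i) := by
        funext i
        rcases lt_or_ge (i : ℕ) l.length with hi | hi
        · have h1 : (Fin.cast hlen i) = Fin.castSucc ⟨(i : ℕ), hi⟩ := rfl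
          rw [Function.comp_apply, h1]
          simp only [hu, Fin.snoc_castSucc]
          show l.get ⟨(i:ℕ), hi⟩ = (l ++ [y]).get i
          rw [List.get_eq_getElem, List.get_eq_getElem]
          exact (List.getElem_append_left hi).symm
        · have hieq : (i : ℕ) = l.length := by
            have h2 : (i : ℕ) < l.length + 1 := by
              have h3 := i.isLt
              simpa using h3
            omega
          have h1 : (Fin.cast hlen i) = Fin.last l.length := by
            apply Fin.ext; simpa using hieq
          rw [Function.comp_apply, h1]
          simp only [hu, Fin.snoc_last]
          show y = (l ++ [y]).get i
          rw [List.get_eq_getElem]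
          exact (List.getElem_concat_length hieq _).symm
      have hu_li : LinearIndependent R u := by
        rw [Fintype.linearIndependent_iff]
        intro r hr
        rw [Fin.sum_univ_castSucc] at hr
        simp only [hu, Fin.snoc_castSucc, Fin.snoc_last] at hr
        have hrlast : r (Fin.last l.length) = 0 := by
          apply hrsmul
          have hsum : ∑ i : Fin l.length, r (Fin.castSucc i) • l.get i ∈ Mn :=
            Submodule.sum_mem _ fun i _ => Mn.smul_mem _ (hlMn i)
          have h2 : r (Fin.last l.length) • y
              = - ∑ i : Fin l.length, r (Fin.castSucc i) • l.get i :=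
            eq_neg_of_add_eq_zero_right hr
          rw [h2]
          exact Mn.neg_mem hsum
        have hsum0 : ∑ i : Fin l.length, r (Fin.castSucc i) • l.get i = 0 := by
          rw [hrlast, zero_smul, add_zero] at hr
          exact hr
        have hcoef := Fintype.linearIndependent_iff.1 hli _ hsum0
        intro i
        exact Fin.lastCases hrlast (fun j => hcoef j) i
      have hli' : LinearIndependent R (fun i : Fin (l ++ [y]).length => (l ++ [y]).get i) := by
        rw [← hfun]
        exact hu_li.comp _ (Fin.cast_injective hlen)
      refine ⟨l ++ [y], ⟨[y], rfl⟩, hli', ?_⟩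
      -- span
      have hset : {x | x ∈ l ++ [y]} = {x | x ∈ l} ∪ {y} := by
        ext z; simp [List.mem_append, or_comm]
      rw [hset, Submodule.span_union, hspan]
      apply le_antisymm
      · apply sup_le hMle
        rw [Submodule.span_le, Set.singleton_subset_iff]
        exact hyMn1
      · intro x hx
        obtain ⟨c, hc, hcv⟩ := hMem_sup x hx
        have hcJ : c ∈ J := Submodule.mem_comap.2 (hc ▸ ⟨x, hx, rfl⟩)
        rw [hJg] at hcJ
        obtain ⟨r, hr⟩ := Submodule.mem_span_singleton.1 hcJ
        have hxy : x - r • y ∈ Mn := by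
          constructor
          · exact M'.sub_mem hx.1 (M'.smul_mem _ hyMn1.1)
          · show x - r • y ∈ Vsn
            apply (hkerp _).1
            rw [map_sub, map_smul, hy, ← hc, ← map_smul, ← map_sub]
            have : c - r • g = 0 := by rw [← hr]; exact sub_self _
            rw [this, map_zero]
        apply Submodule.mem_sup.2
        exact ⟨x - r • y, hxy, r • y,
          Submodule.smul_mem _ _ (Submodule.mem_span_singleton_self y), by abel⟩

theorem kap_chain {α : Type*} (P : ℕ → List α → Prop) (h0 : P 0 [])
    (hstep : ∀ n l, P n l → ∃ l', l <+: l' ∧ P (n + 1) l') :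
    ∃ f : ℕ → List α, (∀ n, P n (f n)) ∧ ∀ n, f n <+: f (n + 1) := by
  choose g hg1 hg2 using hstep
  let F : ∀ n : ℕ, {l : List α // P n l} :=
    fun n => Nat.rec ⟨[], h0⟩ (fun k ih => ⟨g k ih.1 ih.2, hg2 k ih.1 ih.2⟩) n
  exact ⟨fun n => (F n).1, fun n => (F n).2, fun n => hg1 n (F n).1 (F n).2⟩

theorem kap_chain_mono {α : Type*} {f : ℕ → List α} (h : ∀ n, f n <+: f (n + 1)) :
    ∀ m n, m ≤ n → f m <+: f n := by
  intro m n hmn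
  induction n, hmn using Nat.le_induction with
  | base => exact List.prefix_rfl
  | succ n hmn ih => exact ih.trans (h n)


end KapAux

set_option maxHeartbeats 1600000 in
theorem kap_free {R K V : Type} [CommRing R] [IsDomain R] [IsDiscreteValuationRing R]
    {π : R} (hπ : Irreducible π) [IsAdicComplete (Ideal.span {π}) R]
    [Field K] [Algebra R K] [IsFractionRing R K]
    [AddCommGroup V] [Module K V] [Module R V] [IsScalarTower R K V]
    (M' : Submodule R V) (hsepM' : KSep π M')
    (hcount : Module.rank K V ≤ Cardinal.aleph0)
    (hspanM' : Submodule.span K (M' : Set V) = ⊤) :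
    Module.Free R ↥M' := by
  classical
  obtain ⟨bset, hbsub, hbspan, hbli⟩ := exists_linearIndependent K (M' : Set V)
  rw [hspanM'] at hbspan
  have hbcount : bset.Countable := by
    rw [← Cardinal.le_aleph0_iff_set_countable]
    exact hbli.cardinal_le_rank'.trans hcount
  rcases Set.eq_empty_or_nonempty bset with hbe | hbne
  · have hM'triv : M' = ⊥ := by
      rw [eq_bot_iff]
      intro x hx
      have : x ∈ (⊥ : Submodule K V) := by
        rw [← Submodule.span_empty (R := K) (M := V), ← hbe, hbspan]
        trivial
      simpa using this
    rw [hM'triv]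
    infer_instance
  · obtain ⟨s, hs⟩ := hbcount.exists_eq_range hbne
    have hsM' : ∀ n, s n ∈ M' := fun n => hbsub (hs ▸ ⟨n, rfl⟩)
    have hstop : Submodule.span K (Set.range s) = ⊤ := by rw [← hs, hbspan]
    -- build the chain
    set P : ℕ → List V → Prop := fun n l =>
      LinearIndependent R (fun i : Fin l.length => l.get i) ∧
      Submodule.span R {x | x ∈ l}
        = M' ⊓ (Submodule.span K (s '' Set.Iio n)).restrictScalars R with hP
    have h0 : P 0 [] := by
      constructor
      · haveI : IsEmpty (Fin ([] : List V).length) := ⟨fun i => absurd i.isLt (by simp)⟩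
        exact linearIndependent_empty_type
      · have h1 : {x : V | x ∈ ([] : List V)} = (∅ : Set V) := by ext z; simp
        have h2 : s '' Set.Iio (0 : ℕ) = (∅ : Set V) := by
          have h3 : Set.Iio (0 : ℕ) = ∅ := by ext j; simp
          rw [h3, Set.image_empty]
        rw [h1, h2, Submodule.span_empty, Submodule.span_empty]
        have h4 : (Submodule.restrictScalars R (⊥ : Submodule K V)) = ⊥ := by
          ext z; simp
        rw [h4, inf_bot_eq]
    obtain ⟨f, hfP, hfpre⟩ := kap_chain P h0 (fun n l hl => by
      obtain ⟨l', h1, h2, h3⟩ := kap_step hπ M' hsepM' s n l hl.1 hl.2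
      exact ⟨l', h1, h2, h3⟩)
    -- the union basis
    set B : Set V := ⋃ n, {x | x ∈ f n} with hB
    have hBM' : ∀ x ∈ B, x ∈ M' := by
      intro x hx
      obtain ⟨n, hn⟩ := Set.mem_iUnion.1 hx
      have : x ∈ Submodule.span R {z | z ∈ f n} := Submodule.subset_span hn
      rw [(hfP n).2] at this
      exact this.1
    set vfam : B → M' := fun x => ⟨x.1, hBM' x.1 x.2⟩ with hvfam
    have hli : LinearIndependent R ((↑) : B → V) := by
      apply linearIndepOn_iUnion_of_directed (v := id)
      · intro i j
        refine ⟨max i j, ?_, ?_⟩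
        · exact fun x hx => (kap_chain_mono hfpre i (max i j) (le_max_left _ _)).subset hx
        · exact fun x hx => (kap_chain_mono hfpre j (max i j) (le_max_right _ _)).subset hx
      · intro n
        have := (hfP n).1
        have h2 := this.linearIndepOn_id
        rw [← kap_list_set] at h2
        exact h2
    have hlifam : LinearIndependent R vfam := by
      have hcomp : (M'.subtype) ∘ vfam = ((↑) : B → V) := rfl
      exact LinearIndependent.of_comp M'.subtype (by rw [hcomp]; exact hli)
    have hspanfam : ⊤ ≤ Submodule.span R (Set.range vfam) := by
      rintro ⟨x, hx⟩ -
      -- x is in some Mn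
      have hxn : ∃ n, x ∈ M' ⊓ (Submodule.span K (s '' Set.Iio n)).restrictScalars R := by
        have hx2 : x ∈ Submodule.span K (Set.range s) := by rw [hstop]; trivial
        have hr : Set.range s = ⋃ n, s '' Set.Iio n := by
          ext z
          simp only [Set.mem_range, Set.mem_iUnion, Set.mem_image, Set.mem_Iio]
          constructor
          · rintro ⟨n, rfl⟩; exact ⟨n + 1, n, Nat.lt_succ_self n, rfl⟩
          · rintro ⟨n, m, _, rfl⟩; exact ⟨m, rfl⟩
        rw [hr, Submodule.span_iUnion] at hx2
        set a : ℕ →o Submodule K V :=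
          ⟨fun n => Submodule.span K (s '' Set.Iio n), by
            intro i j hij
            apply Submodule.span_mono
            exact Set.image_mono fun z hz => lt_of_lt_of_le hz hij⟩ with ha
        obtain ⟨n, hn⟩ := (Submodule.mem_iSup_of_chain a x).1 hx2
        exact ⟨n, hx, hn⟩
      obtain ⟨n, hn⟩ := hxn
      have hxspan : x ∈ Submodule.span R {z | z ∈ f n} := by rw [(hfP n).2]; exact hn
      -- transfer to the subtype
      have himg : Submodule.map M'.subtype (Submodule.span R (Set.range vfam))
          = Submodule.span R B := by
        rw [Submodule.map_span]
        congr 1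
        ext z
        simp only [Set.mem_image, Set.mem_range]
        constructor
        · rintro ⟨w, ⟨u, rfl⟩, rfl⟩; exact u.2
        · intro hz; exact ⟨vfam ⟨z, hz⟩, ⟨⟨z, hz⟩, rfl⟩, rfl⟩
      have hxB : x ∈ Submodule.span R B := by
        refine Submodule.span_mono ?_ hxspan
        exact fun z hz => Set.mem_iUnion.2 ⟨n, hz⟩
      rw [← himg] at hxB
      obtain ⟨w, hw, hwx⟩ := hxB
      have : w = ⟨x, hx⟩ := Subtype.ext hwx
      rwa [← this]
    have hbasis : Module.Basis B R M' := Module.Basis.mk hlifam hspanfam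
    haveI hfreeM' : Module.Free R M' := Module.Free.of_basis hbasis
    exact hfreeM'

set_option maxHeartbeats 1600000 in
/-- Kaplansky's criterion: over a complete DVR `R` with uniformizer `π` and fraction
field `K`, a flat `R`-module `M` with `dim_K (K ⊗ M)` countable is free iff
`⋂ₙ πⁿ M = 0`. -/
theorem stmt13 {R : Type} [CommRing R] [IsDomain R] [IsDiscreteValuationRing R]
    (π : R) (hπ : Irreducible π) [IsAdicComplete (Ideal.span {π}) R]
    (M : Type) [AddCommGroup M] [Module R M] [Module.Flat R M]
    (hcount : Module.rank (FractionRing R) (FractionRing R ⊗[R] M) ≤ Cardinal.aleph0) :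
    Module.Free R M ↔
      (⨅ n : ℕ, LinearMap.range ((π ^ n) • (LinearMap.id : M →ₗ[R] M))) = ⊥ := by
  classical
  constructor
  · -- forward direction
    intro hfree
    rw [eq_bot_iff]
    intro x hx
    rw [Submodule.mem_bot]
    set b := Module.Free.chooseBasis R M with hb
    have hdvd : ∀ i, ∀ n : ℕ, π ^ n ∣ b.repr x i := by
      intro i n
      have hxn : x ∈ LinearMap.range ((π ^ n) • (LinearMap.id : M →ₗ[R] M)) :=
        (Submodule.mem_iInf _).1 hx n
      obtain ⟨y, hy⟩ := hxn
      have : π ^ n • y = x := by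
        simpa using hy
      refine ⟨b.repr y i, ?_⟩
      rw [← this, map_smul, Finsupp.smul_apply, smul_eq_mul]
    have hrzero : b.repr x = 0 := by
      ext i
      exact kap_zero_of_dvd hπ _ (hdvd i)
    exact b.repr.injective (by rw [hrzero, map_zero] : b.repr x = b.repr 0)
  · -- reverse direction
    intro hint
    set K := FractionRing R with hK
    set V := FractionRing R ⊗[R] M with hV
    set φ : M →ₗ[R] V :=
      ((Algebra.linearMap R K).rTensor M).comp (TensorProduct.lid R M).symm.toLinearMap with hφdef
    have hφ_apply : ∀ m : M, φ m = (1 : K) ⊗ₜ[R] m := by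
      intro m
      simp [hφdef]
    have hφ : Function.Injective φ := by
      have h1 : Function.Injective ((Algebra.linearMap R K).rTensor M) :=
        Module.Flat.rTensor_preserves_injective_linearMap _ (IsFractionRing.injective R K)
      have h2 : Function.Injective ((TensorProduct.lid R M).symm.toLinearMap) :=
        (TensorProduct.lid R M).symm.injective
      rw [hφdef, LinearMap.coe_comp]
      exact h1.comp h2
    set M' : Submodule R V := LinearMap.range φ with hM'
    have hsepM' : KSep π M' := by
      intro x hx hdiv
      obtain ⟨m, rfl⟩ := hx
      have hm : m ∈ (⨅ n : ℕ, LinearMap.range ((π ^ n) • (LinearMap.id : M →ₗ[R] M))) := by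
        rw [Submodule.mem_iInf]
        intro n
        obtain ⟨y, hyM, hxy⟩ := hdiv n
        obtain ⟨z, rfl⟩ := hyM
        refine ⟨z, ?_⟩
        have : φ m = φ (π ^ n • z) := by rw [map_smul]; exact hxy
        have hmz := hφ this
        simpa using hmz.symm
      rw [hint, Submodule.mem_bot] at hm
      rw [hm, map_zero]
    have hspanM' : Submodule.span K (M' : Set V) = ⊤ := by
      rw [← top_le_iff]
      have htop := TensorProduct.span_tmul_eq_top R K M
      have hle : Submodule.span R {t : V | ∃ k m, k ⊗ₜ m = t}
          ≤ (Submodule.span K (M' : Set V)).restrictScalars R := by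
        rw [Submodule.span_le]
        rintro t ⟨k, m, rfl⟩
        show k ⊗ₜ[R] m ∈ Submodule.span K (M' : Set V)
        have : k ⊗ₜ[R] m = k • ((1 : K) ⊗ₜ[R] m) := by
          rw [smul_tmul', smul_eq_mul, mul_one]
        rw [this]
        exact Submodule.smul_mem _ _ (Submodule.subset_span ⟨m, (hφ_apply m).symm ▸ rfl⟩)
      rw [htop] at hle
      intro x _
      exact hle trivial
    haveI hfree' : Module.Free R ↥M' := kap_free hπ M' hsepM' hcount hspanM'
    exact Module.Free.of_equiv (LinearEquiv.ofInjective φ hφ).symm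
end

section
/- Let R be a DVR, G a flat affine group scheme of finite type over R with Hopf algebra R[G], and H a closed subgroup cut out by an ideal I. Let V ⊆ R[G] be a finitely generated R-subcomodule of the right-regular representation containing generators of I, and set W = V ∩ I. Then W is saturated in V, and choosing a basis v_1,…,v_s of V with v_1,…,v_r a basis of W and writing Δv_j = Σ_i v_i ⊗ a_{ij}, the ideal J = (a_{ij} : i > r, j ≤ r) equals I. -/
open TensorProduct

-- torsion-freeness of flat modules over a domain
lemma aux_flat_smul_inj {R : Type} [CommRing R] [IsDomain R] {N : Type} [AddCommGroup N]
    [Module R N] [Module.Flat R N] {c : R} (hc : c ≠ 0) {x : N} (h : c • x = 0) : x = 0 := by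
  have hinj : Function.Injective (LinearMap.lsmul R R c) := by
    intro a b hab
    simpa using mul_left_cancel₀ hc (by simpa using hab)
  have hinj2 : Function.Injective ((LinearMap.lsmul R R c).rTensor N) :=
    Module.Flat.rTensor_preserves_injective_linearMap _ hinj
  have h1 : (LinearMap.lsmul R R c).rTensor N ((1 : R) ⊗ₜ[R] x) = 0 := by
    rw [LinearMap.rTensor_tmul]
    calc ((LinearMap.lsmul R R c) 1) ⊗ₜ[R] x = ((c : R) • (1 : R)) ⊗ₜ[R] x := by
          simp
      _ = (1 : R) ⊗ₜ[R] (c • x) := smul_tmul _ _ _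
      _ = 0 := by rw [h, tmul_zero]
  have h2 : (1 : R) ⊗ₜ[R] x = 0 := hinj2 (by simpa using h1)
  have := congrArg (TensorProduct.lid R N) h2
  simpa using this

-- flat vanishing lemma
lemma aux_flat_indep {R : Type} [CommRing R] {M N : Type} [AddCommGroup M] [Module R M]
    [AddCommGroup N] [Module R N] [Module.Flat R N] {ι : Type} [Fintype ι] [DecidableEq ι]
    {v : ι → M} (hv : LinearIndependent R v) (n : ι → N)
    (h : ∑ i, v i ⊗ₜ[R] n i = 0) (i : ι) : n i = 0 := by
  set G := Finsupp.linearCombination R v with hG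
  have hGinj : Function.Injective G := hv
  have hinj : Function.Injective (G.rTensor N) :=
    Module.Flat.rTensor_preserves_injective_linearMap _ hGinj
  have h1 : (G.rTensor N) (∑ i, Finsupp.single i 1 ⊗ₜ[R] n i) = 0 := by
    simp [map_sum, LinearMap.rTensor_tmul, hG, h]
  have h2 : (∑ i, Finsupp.single i 1 ⊗ₜ[R] n i : (ι →₀ R) ⊗[R] N) = 0 :=
    hinj (by simpa using h1)
  have h3 := congrArg (TensorProduct.finsuppScalarLeft R N ι) h2
  have h4 := congrArg (fun f => f i) h3
  simpa [map_sum, TensorProduct.finsuppScalarLeft_apply_tmul, Finsupp.sum_single_index,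
    Finsupp.finset_sum_apply, Finsupp.single_apply, Finset.sum_ite_eq'] using h4

/-- Let `B = R[G]` be the flat finite-type Hopf algebra of a group scheme over a DVR
`R`, `I` a Hopf ideal cutting out a flat closed subgroup (`B/I` flat), and
`V ⊆ B` a finitely generated subcomodule of the right-regular representation
containing generators of `I`.  Then `W = V ∩ I` is saturated in `V`, and for any
basis `v₀, …, v_{s-1}` of `V` whose first `r` vectors form a basis of `W`, writing
`Δ vⱼ = Σᵢ vᵢ ⊗ aᵢⱼ`, the ideal generated by the `aᵢⱼ` with `i ≥ r`, `j < r`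
equals `I`. -/
theorem stmt18 {R : Type} [CommRing R] [IsDomain R] [IsDiscreteValuationRing R]
    {B : Type} [CommRing B] [HopfAlgebra R B] [Module.Flat R B]
    (hBft : Algebra.FiniteType R B) (I : Ideal B) [Module.Flat R (B ⧸ I)]
    (hcounit : ∀ a ∈ I, Coalgebra.counit (R := R) (A := B) a = (0 : R))
    (hcomul : ∀ a ∈ I, Coalgebra.comul (R := R) (A := B) a ∈
        LinearMap.range
          (TensorProduct.map (I.restrictScalars R).subtype (LinearMap.id : B →ₗ[R] B)) ⊔
        LinearMap.range
          (TensorProduct.map (LinearMap.id : B →ₗ[R] B) (I.restrictScalars R).subtype))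
    (hantipode : ∀ a ∈ I, HopfAlgebra.antipode (R := R) (A := B) a ∈ I)
    (V : Submodule R B) (hVfg : V.FG)
    (hVsub : ∀ x ∈ V, Coalgebra.comul (R := R) (A := B) x ∈
        LinearMap.range (TensorProduct.map V.subtype (LinearMap.id : B →ₗ[R] B)))
    (hVgen : ∃ S : Set B, S ⊆ ↑V ∧ Ideal.span S = I) :
    (∀ x ∈ V, ∀ c : R, c ≠ 0 → c • x ∈ V ⊓ I.restrictScalars R →
        x ∈ V ⊓ I.restrictScalars R) ∧
    (∀ (s r : ℕ) (vs : Fin s → B), LinearIndependent R vs →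
        Submodule.span R (Set.range vs) = V →
        Submodule.span R (vs '' {i : Fin s | (i : ℕ) < r}) = V ⊓ I.restrictScalars R →
        ∀ a : Fin s → Fin s → B,
          (∀ j : Fin s, Coalgebra.comul (R := R) (A := B) (vs j) =
            ∑ i : Fin s, vs i ⊗ₜ[R] a i j) →
          Ideal.span {x : B | ∃ i j : Fin s, r ≤ (i : ℕ) ∧ (j : ℕ) < r ∧ a i j = x} = I) := by
  classical
  set π : B →ₗ[R] B ⧸ I := (Ideal.Quotient.mkₐ R I).toLinearMap with hπ
  have hπ0 : ∀ x ∈ I, π x = 0 := by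
    intro x hx
    simpa [hπ] using Ideal.Quotient.eq_zero_iff_mem.mpr hx
  have hπmem : ∀ x : B, π x = 0 → x ∈ I := by
    intro x hx
    exact Ideal.Quotient.eq_zero_iff_mem.mp (by simpa [hπ] using hx)
  constructor
  · rintro x hx c hc ⟨-, hcI⟩
    refine ⟨hx, ?_⟩
    have h0 : c • π x = 0 := by
      rw [← map_smul]
      exact hπ0 _ hcI
    exact hπmem x (aux_flat_smul_inj hc h0)
  · intro s r vs hli hspanV hspanW a ha
    have hvsI : ∀ j : Fin s, (j : ℕ) < r → vs j ∈ I := by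
      intro j hj
      have : vs j ∈ Submodule.span R (vs '' {i : Fin s | (i : ℕ) < r}) :=
        Submodule.subset_span ⟨j, hj, rfl⟩
      rw [hspanW] at this
      exact this.2
    -- linear independence of the images of vs i, i ≥ r, in B ⧸ I
    have hrange : Set.range (vs ∘ (Subtype.val : {i : Fin s // r ≤ (i : ℕ)} → Fin s)) =
        vs '' {i : Fin s | r ≤ (i : ℕ)} := by
      rw [Set.range_comp, Subtype.range_coe_subtype]
    have hdisj : Disjoint (Submodule.span R (Set.range
        (vs ∘ (Subtype.val : {i : Fin s // r ≤ (i : ℕ)} → Fin s)))) (LinearMap.ker π) := by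
      rw [hrange, Submodule.disjoint_def]
      intro x hxA hxK
      have hxI : x ∈ I := hπmem x hxK
      have hxV : x ∈ V := by
        rw [← hspanV]
        exact Submodule.span_mono (Set.image_subset_range vs _) hxA
      have hxW : x ∈ Submodule.span R (vs '' {i : Fin s | (i : ℕ) < r}) := by
        rw [hspanW]; exact ⟨hxV, hxI⟩
      have hd : Disjoint (Submodule.span R (vs '' {i : Fin s | r ≤ (i : ℕ)}))
          (Submodule.span R (vs '' {i : Fin s | (i : ℕ) < r})) := by
        refine hli.disjoint_span_image ?_
        rw [Set.disjoint_left]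
        intro i hi1 hi2
        simp only [Set.mem_setOf_eq] at hi1 hi2
        omega
      exact Submodule.disjoint_def.mp hd x hxA hxW
    have hli2 : LinearIndependent R
        (fun i : {i : Fin s // r ≤ (i : ℕ)} => π (vs i.1)) :=
      (hli.comp Subtype.val Subtype.val_injective).map hdisj
    refine le_antisymm ?_ ?_
    · rw [Ideal.span_le]
      rintro x ⟨i, j, hi, hj, rfl⟩
      -- show a i j ∈ I
      have hcj := hcomul (vs j) (hvsI j hj)
      obtain ⟨y, hy, z, hz, hyz⟩ := Submodule.mem_sup.mp hcj
      obtain ⟨t, rfl⟩ := hy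
      obtain ⟨u, rfl⟩ := hz
      have hzero1 : π ∘ₗ (I.restrictScalars R).subtype = 0 := by
        ext ⟨x, hx⟩
        exact hπ0 x hx
      have hmap : TensorProduct.map π π (Coalgebra.comul (R := R) (vs j)) = 0 := by
        rw [← hyz, map_add]
        have h1 : TensorProduct.map π π
            (TensorProduct.map (I.restrictScalars R).subtype LinearMap.id t) = 0 := by
          rw [← LinearMap.comp_apply, ← TensorProduct.map_comp, hzero1]
          have : TensorProduct.map (0 : (I.restrictScalars R) →ₗ[R] B ⧸ I)
              (π ∘ₗ LinearMap.id) = 0 := by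
            apply TensorProduct.ext'
            intro m n
            simp
          rw [this, LinearMap.zero_apply]
        have h2 : TensorProduct.map π π
            (TensorProduct.map LinearMap.id (I.restrictScalars R).subtype u) = 0 := by
          rw [← LinearMap.comp_apply, ← TensorProduct.map_comp, hzero1]
          have : TensorProduct.map (π ∘ₗ LinearMap.id)
              (0 : (I.restrictScalars R) →ₗ[R] B ⧸ I) = 0 := by
            apply TensorProduct.ext'
            intro m n
            simp
          rw [this, LinearMap.zero_apply]
        rw [h1, h2, add_zero]
      have hmap2 : ∑ i : Fin s, π (vs i) ⊗ₜ[R] π (a i j) = 0 := by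
        rw [← hmap, ha j, map_sum]
        simp [TensorProduct.map_tmul]
      have hsum : ∑ i : {i : Fin s // r ≤ (i : ℕ)}, π (vs i.1) ⊗ₜ[R] π (a i.1 j) = 0 := by
        rw [← hmap2]
        rw [← Finset.sum_subtype (Finset.univ.filter (fun i : Fin s => r ≤ (i : ℕ)))
          (by simp) (fun i : Fin s => π (vs i) ⊗ₜ[R] π (a i j))]
        refine Finset.sum_subset (Finset.filter_subset _ _) ?_
        intro i _ hi
        have : (i : ℕ) < r := by
          simpa [not_le] using (by simpa using hi : ¬ r ≤ (i : ℕ))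
        rw [hπ0 _ (hvsI i this), TensorProduct.zero_tmul]
      have := aux_flat_indep hli2 (fun i => π (a i.1 j)) hsum ⟨i, hi⟩
      exact hπmem _ this
    · obtain ⟨S, hSV, hSI⟩ := hVgen
      set J := Ideal.span {x : B | ∃ i j : Fin s, r ≤ (i : ℕ) ∧ (j : ℕ) < r ∧ a i j = x}
        with hJ
      have key : ∀ j : Fin s, (j : ℕ) < r → vs j ∈ J := by
        intro j hj
        have h0 := Coalgebra.rTensor_counit_comul (R := R) (vs j)
        rw [ha j, map_sum] at h0
        simp only [LinearMap.rTensor_tmul] at h0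
        have h1 := congrArg (TensorProduct.lid R B) h0
        simp only [map_sum, TensorProduct.lid_tmul, one_smul] at h1
        rw [← h1]
        refine Submodule.sum_mem (J.restrictScalars R) ?_
        intro i _
        by_cases hir : r ≤ (i : ℕ)
        · refine Submodule.smul_mem _ _ ?_
          exact Ideal.subset_span ⟨i, j, hir, hj, rfl⟩
        · rw [hcounit _ (hvsI i (not_le.mp hir)), zero_smul]
          exact Submodule.zero_mem _
      rw [← hSI, Ideal.span_le]
      intro x hxS
      have hxVI : x ∈ V ⊓ I.restrictScalars R :=
        ⟨hSV hxS, by rw [← hSI]; exact Ideal.subset_span hxS⟩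
      rw [← hspanW] at hxVI
      have : Submodule.span R (vs '' {i : Fin s | (i : ℕ) < r}) ≤ J.restrictScalars R := by
        rw [Submodule.span_le]
        rintro _ ⟨jj, hjj, rfl⟩
        exact key jj hjj
      exact this hxVI
end

section
/- Let R be a complete DVR, G a flat affine group scheme over R, and suppose G satisfies: for every representation V on a finitely generated free R-module and every finite subset F ⊆ V, the set of subrepresentations of V containing F has a least element. Then G is prudent: for every such V, any v ∈ V whose reduction modulo π^{n+1}V is semi-invariant for all n is semi-invariant. -/
open TensorProduct

variable {R : Type} [CommRing R]

/-- A submodule `W ⊆ V` is a subrepresentation (subcomodule) for the coaction `ρ`. -/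
def IsSubcomodule {A V : Type} [CommRing A] [Algebra R A]
    [AddCommGroup V] [Module R V] (ρ : V →ₗ[R] V ⊗[R] A) (W : Submodule R V) : Prop :=
  ∀ x ∈ W, ρ x ∈ LinearMap.range (TensorProduct.map W.subtype (LinearMap.id : A →ₗ[R] A))

/-- If in the representation `(V, ρ)` of the flat affine group scheme `G = Spec A`
over the complete DVR `R` every finite subset `F ⊆ V` is contained in a least
subrepresentation, then `V` is prudent: every `v ∈ V` whose reduction modulo
`π^(n+1) V` is semi-invariant for all `n` is semi-invariant. -/
theorem stmt19 [IsDomain R] [IsDiscreteValuationRing R]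
    (π : R) (hπ : Irreducible π) [IsAdicComplete (Ideal.span {π}) R]
    {A V : Type} [CommRing A] [HopfAlgebra R A] [Module.Flat R A]
    [AddCommGroup V] [Module R V] [Module.Finite R V] [Module.Free R V]
    (ρ : V →ₗ[R] V ⊗[R] A) (hρ : IsCoaction ρ)
    (h : ∀ F : Finset V, ∃ W₀ : Submodule R V, IsSubcomodule ρ W₀ ∧ ↑F ⊆ (W₀ : Set V) ∧
      ∀ W : Submodule R V, IsSubcomodule ρ W → ↑F ⊆ (W : Set V) → W₀ ≤ W) :
    ∀ v : V, (∀ n : ℕ, IsSemiInvariantMod π ρ v n) → IsSemiInvariant ρ v := by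
  intro v hv
  obtain ⟨W₀, hW₀sub, hW₀mem, hW₀least⟩ := h {v}
  -- The submodules Wₙ = span v + π^(n+1) V
  set Wn : ℕ → Submodule R V := fun n =>
    Submodule.span R {v} ⊔ LinearMap.range ((π ^ (n + 1)) • (LinearMap.id : V →ₗ[R] V))
    with hWn
  -- Each Wₙ is a subcomodule
  have hsub : ∀ n, IsSubcomodule ρ (Wn n) := by
    intro n x hx
    have hρx := hv n x hx
    have h1 : LinearMap.range
        (TensorProduct.map (Submodule.span R {v}).subtype (LinearMap.id : A →ₗ[R] A)) ≤
        LinearMap.range (TensorProduct.map (Wn n).subtype (LinearMap.id : A →ₗ[R] A)) := by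
      rintro y ⟨z, rfl⟩
      refine ⟨TensorProduct.map
        (Submodule.inclusion (le_sup_left : Submodule.span R {v} ≤ Wn n))
        (LinearMap.id : A →ₗ[R] A) z, ?_⟩
      rw [← LinearMap.comp_apply, ← TensorProduct.map_comp]
      rfl
    have h2 : LinearMap.range ((π ^ (n + 1)) • (LinearMap.id : V ⊗[R] A →ₗ[R] V ⊗[R] A)) ≤
        LinearMap.range (TensorProduct.map (Wn n).subtype (LinearMap.id : A →ₗ[R] A)) := by
      rintro y ⟨t, rfl⟩
      simp only [LinearMap.smul_apply, LinearMap.id_apply]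
      induction t using TensorProduct.induction_on with
      | zero => simp
      | tmul w a =>
        have hw : π ^ (n + 1) • w ∈ Wn n :=
          le_sup_right (a := Submodule.span R {v}) ⟨w, rfl⟩
        refine ⟨(⟨π ^ (n + 1) • w, hw⟩ : Wn n) ⊗ₜ[R] a, ?_⟩
        simp [TensorProduct.smul_tmul']
      | add t₁ t₂ ih₁ ih₂ =>
        rw [smul_add]
        exact add_mem ih₁ ih₂
    exact sup_le h1 h2 hρx
  -- W₀ is contained in each Wₙ
  have hle : ∀ n, W₀ ≤ Wn n := fun n =>
    hW₀least (Wn n) (hsub n) (by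
      intro x hx
      simp only [Finset.coe_singleton, Set.mem_singleton_iff] at hx
      rw [hx]
      exact Submodule.mem_sup_left (Submodule.mem_span_singleton_self v))
  -- Krull intersection: ⋂ₙ Wₙ = span v
  have hinter : ∀ x : V, (∀ n, x ∈ Wn n) → x ∈ Submodule.span R {v} := by
    intro x hx
    have hbot : (⨅ i : ℕ, (Ideal.span {π}) ^ i • ⊤ :
        Submodule R (V ⧸ Submodule.span R {v})) = ⊥ :=
      Ideal.iInf_pow_smul_eq_bot_of_isLocalRing (I := Ideal.span {π})
        (M := V ⧸ Submodule.span R {v}) (by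
          intro htop
          exact hπ.not_isUnit ((Ideal.span_singleton_eq_top).mp htop))
    have hmem : (Submodule.Quotient.mk x : V ⧸ Submodule.span R {v}) ∈
        (⨅ i : ℕ, (Ideal.span {π}) ^ i • ⊤ :
          Submodule R (V ⧸ Submodule.span R {v})) := by
      rw [Submodule.mem_iInf]
      intro i
      cases i with
      | zero => simp
      | succ n =>
        obtain ⟨s, hs, y, ⟨w, rfl⟩, rfl⟩ := Submodule.mem_sup.mp (hx n)
        have : (Submodule.Quotient.mk (s + (π ^ (n + 1) • (LinearMap.id : V →ₗ[R] V)) w) :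
            V ⧸ Submodule.span R {v}) =
            π ^ (n + 1) • (Submodule.Quotient.mk w) := by
          simp only [LinearMap.smul_apply, LinearMap.id_apply]
          rw [Submodule.Quotient.mk_add, Submodule.Quotient.mk_smul,
            (Submodule.Quotient.mk_eq_zero _).mpr hs, zero_add]
        rw [this]
        exact Submodule.smul_mem_smul
          (Ideal.pow_mem_pow (Ideal.mem_span_singleton_self π) (n + 1))
          Submodule.mem_top
    rw [hbot] at hmem
    exact (Submodule.Quotient.mk_eq_zero _).mp hmem
  -- Hence W₀ = span v
  have hW₀eq : W₀ = Submodule.span R {v} := by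
    apply le_antisymm
    · intro x hx
      exact hinter x fun n => hle n hx
    · rw [Submodule.span_le]
      intro x hx
      simp only [Set.mem_singleton_iff] at hx
      subst hx
      exact hW₀mem (by simp)
  intro x hx
  have := hW₀sub x (hW₀eq ▸ hx)
  rwa [hW₀eq] at this
end
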